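/- arXiv:1208.4415 — 4 statements merged into one kernel-verified Lean document; each statement's English description precedes it below -/
import Mathlib

section
/- For any discrete random sequence W^n with distribution π on W^n such that ‖π_{W^n} − ∏_{t=1}^n γ_W‖_TV ≤ ε < 1/4 for a single-letter distribution γ_W on a finite alphabet W, and any random time index T ∈ {1,…,n} independent of W^n, the mutual information between the sampled variable and the time index satisfies I_π(W_T ; T) ≤ 4ε (log|W| + log(1/ε)). -/
open Real Finset

/-- Entropy in bits of a (finite-alphabet) probability mass function. -/
noncomputable def H2 {α : Type*} [Fintype α] (P : α → ℝ) : ℝ :=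
  -∑ a, P a * Real.logb 2 (P a)

lemma aux_subadd {u v : ℝ} (hu : 0 ≤ u) (hv : 0 ≤ v) :
    Real.negMulLog (u + v) ≤ Real.negMulLog u + Real.negMulLog v := by
  rcases eq_or_lt_of_le hu with h | h
  · simp [← h]
  rcases eq_or_lt_of_le hv with h' | h'
  · simp [← h']
  have l1 : Real.log u ≤ Real.log (u + v) := Real.log_le_log h (by linarith)
  have l2 : Real.log v ≤ Real.log (u + v) := Real.log_le_log h' (by linarith)
  simp only [Real.negMulLog, neg_mul]
  nlinarith

lemma aux_lower {u v : ℝ} (hu : 0 ≤ u) (hv : 0 ≤ v) (huv : u + v ≤ 1) :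
    Real.negMulLog u - v ≤ Real.negMulLog (u + v) := by
  rcases eq_or_lt_of_le hu with h | h
  · have := Real.negMulLog_nonneg hv (by linarith)
    simp only [← h, zero_add, Real.negMulLog_zero]
    linarith
  have hlog : Real.log (u + v) - Real.log u ≤ v / u := by
    have h1 : Real.log ((u + v) / u) ≤ (u + v) / u - 1 :=
      Real.log_le_sub_one_of_pos (by positivity)
    rw [Real.log_div (by linarith) (ne_of_gt h)] at h1
    have : (u + v) / u - 1 = v / u := by field_simp; ring
    linarith
  have hlog2 : Real.log (u + v) ≤ 0 := Real.log_nonpos (by linarith) huv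
  simp only [Real.negMulLog, neg_mul]
  have key : u * Real.log (u + v) - u * Real.log u ≤ v := by
    have := mul_le_mul_of_nonneg_left hlog (le_of_lt h)
    rw [mul_div_cancel₀] at this
    · linarith [mul_sub u (Real.log (u+v)) (Real.log u)]
    · exact ne_of_gt h
  nlinarith

lemma aux_maxent {α : Type*} [Fintype α] (d : α → ℝ) (hd : ∀ a, 0 ≤ d a)
    (δ : ℝ) (hδ : ∑ a, d a = δ) (hδ0 : 0 < δ) :
    ∑ a, Real.negMulLog (d a) ≤ δ * Real.log ((Fintype.card α : ℝ) / δ) := by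
  have hne : Nonempty α := by
    by_contra h
    rw [not_nonempty_iff] at h
    rw [Finset.sum_of_isEmpty] at hδ
    linarith
  have hc : (0:ℝ) < (Fintype.card α : ℝ) := by
    have := Fintype.card_pos (α := α)
    exact_mod_cast this
  have key : ∀ a, Real.negMulLog (d a) ≤ d a * Real.log ((Fintype.card α : ℝ) / δ)
      + (δ / (Fintype.card α : ℝ) - d a) := by
    intro a
    rcases eq_or_lt_of_le (hd a) with h | h
    · rw [← h]; simp; positivity
    · have h1 : Real.log (δ / (d a * (Fintype.card α : ℝ))) ≤ δ / (d a * (Fintype.card α : ℝ)) - 1 :=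
        Real.log_le_sub_one_of_pos (by positivity)
      have h2 : Real.log (δ / (d a * (Fintype.card α : ℝ)))
          = -Real.log (d a) - Real.log ((Fintype.card α : ℝ) / δ) := by
        rw [Real.log_div (ne_of_gt hδ0) (by positivity), Real.log_mul (ne_of_gt h) (ne_of_gt hc),
          Real.log_div (ne_of_gt hc) (ne_of_gt hδ0)]
        ring
      rw [h2] at h1
      have h3 := mul_le_mul_of_nonneg_left h1 (le_of_lt h)
      have h4 : d a * (δ / (d a * (Fintype.card α : ℝ)) - 1) = δ / (Fintype.card α : ℝ) - d a := by
        field_simp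
      rw [h4] at h3
      simp only [Real.negMulLog, neg_mul]
      nlinarith
  calc ∑ a, Real.negMulLog (d a)
      ≤ ∑ a, (d a * Real.log ((Fintype.card α : ℝ) / δ) + (δ / (Fintype.card α : ℝ) - d a)) :=
        Finset.sum_le_sum fun a _ => key a
    _ = δ * Real.log ((Fintype.card α : ℝ) / δ)
        + ((Fintype.card α : ℝ) * (δ / (Fintype.card α : ℝ)) - δ) := by
        rw [Finset.sum_add_distrib, ← Finset.sum_mul, hδ, Finset.sum_sub_distrib, hδ,
          Finset.sum_const, Finset.card_univ]
        push_cast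
        ring
    _ = δ * Real.log ((Fintype.card α : ℝ) / δ) := by
        field_simp; ring

lemma aux_glog {δ ε : ℝ} (hδ0 : 0 < δ) (hδε : δ ≤ ε) (hε : ε < 1/4) :
    δ * Real.log (1/δ) ≤ ε * Real.log (1/ε) := by
  have hε0 : 0 < ε := lt_of_lt_of_le hδ0 hδε
  have hlogε : 1 ≤ Real.log (1/ε) := by
    have h4 : (4:ℝ) ≤ 1/ε := by
      rw [le_div_iff₀ hε0]; linarith
    have : Real.log 4 ≤ Real.log (1/ε) := Real.log_le_log (by norm_num) h4
    have l4 : Real.log 4 = 2 * Real.log 2 := by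
      rw [show (4:ℝ) = 2^2 by norm_num, Real.log_pow]; push_cast; ring
    have := Real.log_two_gt_d9
    linarith
  have h1 : Real.log (ε/δ) ≤ ε/δ - 1 := Real.log_le_sub_one_of_pos (by positivity)
  have h2 : Real.log (1/δ) = Real.log (1/ε) + Real.log (ε/δ) := by
    rw [Real.log_div one_ne_zero (ne_of_gt hδ0), Real.log_div one_ne_zero (ne_of_gt hε0),
      Real.log_div (ne_of_gt hε0) (ne_of_gt hδ0)]
    ring
  have h3 : δ * Real.log (ε/δ) ≤ ε - δ := by
    have := mul_le_mul_of_nonneg_left h1 (le_of_lt hδ0)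
    have e : δ * (ε/δ - 1) = ε - δ := by field_simp
    linarith [e ▸ this]
  rw [h2]
  nlinarith

lemma H2_eq {α : Type*} [Fintype α] (P : α → ℝ) :
    H2 P = (∑ a, Real.negMulLog (P a)) / Real.log 2 := by
  unfold H2
  rw [Finset.sum_div, ← Finset.sum_neg_distrib]
  congr 1
  ext a
  rw [Real.negMulLog, Real.logb]
  ring

lemma fannes {α : Type*} [Fintype α] (P Q : α → ℝ)
    (hP0 : ∀ a, 0 ≤ P a) (hP1 : ∑ a, P a = 1)
    (hQ0 : ∀ a, 0 ≤ Q a) (hQ1 : ∑ a, Q a = 1)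
    (ε : ℝ) (hε : ε < 1/4) (htv : (1/2) * ∑ a, |P a - Q a| ≤ ε) :
    H2 P - H2 Q ≤ ε * Real.logb 2 (Fintype.card α) + 2 * ε * Real.logb 2 (1/ε) := by
  have hε0 : 0 ≤ ε := le_trans (by positivity) htv
  have hcard1 : (1:ℝ) ≤ (Fintype.card α : ℝ) := by
    have hne : Nonempty α := by
      by_contra h
      rw [not_nonempty_iff] at h
      rw [Finset.sum_of_isEmpty] at hP1
      linarith
    exact_mod_cast Fintype.card_pos (α := α)
  have hlogc : 0 ≤ Real.log (Fintype.card α : ℝ) := Real.log_nonneg hcard1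
  -- reduce to natural log
  have key : ∑ a, Real.negMulLog (P a) - ∑ a, Real.negMulLog (Q a)
      ≤ ε * Real.log (Fintype.card α : ℝ) + 2 * ε * Real.log (1/ε) := by
    set m : α → ℝ := fun a => min (P a) (Q a) with hm
    set d : α → ℝ := fun a => P a - m a with hd
    set e : α → ℝ := fun a => Q a - m a with he
    have hd0 : ∀ a, 0 ≤ d a := fun a => by simp [hd, hm, min_le_left]
    have he0 : ∀ a, 0 ≤ e a := fun a => by simp [he, hm, min_le_right]
    set δ : ℝ := ∑ a, d a with hδ
    have hδ0 : 0 ≤ δ := Finset.sum_nonneg fun a _ => hd0 a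
    have hesum : ∑ a, e a = δ := by
      have : ∑ a, d a - ∑ a, e a = ∑ a, (d a - e a) := (Finset.sum_sub_distrib _ _).symm
      have h2 : ∑ a, (d a - e a) = ∑ a, (P a - Q a) := by
        apply Finset.sum_congr rfl; intro a _; simp [hd, he]
      have h3 : ∑ a, (P a - Q a) = 0 := by rw [Finset.sum_sub_distrib, hP1, hQ1]; ring
      have := this.trans (h2.trans h3)
      linarith [sub_eq_zero.mp this]
    have habs : ∀ a, |P a - Q a| = d a + e a := by
      intro a
      rcases le_total (P a) (Q a) with h | h
      · rw [abs_of_nonpos (by linarith)]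
        simp [hd, he, hm, min_eq_left h]
      · rw [abs_of_nonneg (by linarith)]
        simp [hd, he, hm, min_eq_right h]
    have hδε : δ ≤ ε := by
      have : ∑ a, |P a - Q a| = δ + δ := by
        rw [Finset.sum_congr rfl fun a _ => habs a, Finset.sum_add_distrib, hesum]
      rw [this] at htv
      linarith
    rcases eq_or_lt_of_le hδ0 with hz | hδpos
    · -- δ = 0: P = Q
      have hPQ : ∀ a, P a = Q a := by
        intro a
        have hda : d a = 0 := by
          have := Finset.sum_eq_zero_iff_of_nonneg (fun a _ => hd0 a) |>.mp hz.symm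
          exact this a (Finset.mem_univ a)
        have hea : e a = 0 := by
          have := Finset.sum_eq_zero_iff_of_nonneg (fun a _ => he0 a) |>.mp (hesum.trans hz.symm)
          exact this a (Finset.mem_univ a)
        simp [hd] at hda
        simp [he] at hea
        linarith
      have : ∑ a, Real.negMulLog (P a) = ∑ a, Real.negMulLog (Q a) := by
        apply Finset.sum_congr rfl; intro a _; rw [hPQ a]
      rw [this]
      have : 0 ≤ ε * Real.log (1/ε) := by
        rcases eq_or_lt_of_le hε0 with h | h
        · simp [← h]
        · have : (1:ℝ) ≤ 1/ε := by rw [le_div_iff₀ h]; linarith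
          have := Real.log_nonneg this
          positivity
      nlinarith
    · -- δ > 0
      have hQle1 : ∀ a, Q a ≤ 1 := by
        intro a
        rw [← hQ1]
        exact Finset.single_le_sum (fun i _ => hQ0 i) (Finset.mem_univ a)
      have hup : ∀ a, Real.negMulLog (P a) ≤ Real.negMulLog (m a) + Real.negMulLog (d a) := by
        intro a
        have : P a = m a + d a := by simp [hd]
        rw [this]
        exact aux_subadd (le_min (hP0 a) (hQ0 a)) (hd0 a)
      have hlo : ∀ a, Real.negMulLog (m a) - e a ≤ Real.negMulLog (Q a) := by
        intro a
        have hq : Q a = m a + e a := by simp [he]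
        rw [hq]
        exact aux_lower (le_min (hP0 a) (hQ0 a)) (he0 a) (by rw [← hq]; exact hQle1 a)
      have step1 : ∑ a, Real.negMulLog (P a) - ∑ a, Real.negMulLog (Q a)
          ≤ ∑ a, Real.negMulLog (d a) + δ := by
        have h1 : ∑ a, Real.negMulLog (P a)
            ≤ ∑ a, Real.negMulLog (m a) + ∑ a, Real.negMulLog (d a) := by
          rw [← Finset.sum_add_distrib]
          exact Finset.sum_le_sum fun a _ => hup a
        have h2 : ∑ a, Real.negMulLog (m a) - δ ≤ ∑ a, Real.negMulLog (Q a) := by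
          rw [← hesum, ← Finset.sum_sub_distrib]
          exact Finset.sum_le_sum fun a _ => hlo a
        linarith
      have step2 : ∑ a, Real.negMulLog (d a) ≤ δ * Real.log ((Fintype.card α : ℝ)) + δ * Real.log (1/δ) := by
        have := aux_maxent d hd0 δ rfl hδpos
        have hsplit : Real.log ((Fintype.card α : ℝ) / δ)
            = Real.log (Fintype.card α : ℝ) + Real.log (1/δ) := by
          rw [Real.log_div (by linarith) (ne_of_gt hδpos), Real.log_div one_ne_zero (ne_of_gt hδpos)]
          simp
          ring
        rw [hsplit] at this
        linarith [this, mul_add δ (Real.log (Fintype.card α : ℝ)) (Real.log (1/δ))]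
      have hεpos : 0 < ε := lt_of_lt_of_le hδpos hδε
      have hlogε : 1 ≤ Real.log (1/ε) := by
        have h4 : (4:ℝ) ≤ 1/ε := by rw [le_div_iff₀ hεpos]; linarith
        have h5 : Real.log 4 ≤ Real.log (1/ε) := Real.log_le_log (by norm_num) h4
        have l4 : Real.log 4 = 2 * Real.log 2 := by
          rw [show (4:ℝ) = 2^2 by norm_num, Real.log_pow]; push_cast; ring
        have := Real.log_two_gt_d9
        linarith
      have step3 : δ * Real.log (1/δ) ≤ ε * Real.log (1/ε) := aux_glog hδpos hδε hε
      have step4 : δ * Real.log (Fintype.card α : ℝ) ≤ ε * Real.log (Fintype.card α : ℝ) :=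
        mul_le_mul_of_nonneg_right hδε hlogc
      have step5 : δ ≤ ε * Real.log (1/ε) := by nlinarith
      linarith
  rw [H2_eq, H2_eq, Real.logb, Real.logb, div_sub_div_same]
  have hlog2 : 0 < Real.log 2 := Real.log_pos (by norm_num)
  rw [div_le_iff₀ hlog2]
  calc ∑ a, Real.negMulLog (P a) - ∑ a, Real.negMulLog (Q a)
        ≤ ε * Real.log (Fintype.card α : ℝ) + 2 * ε * Real.log (1/ε) := key
      _ = (ε * (Real.log ↑(Fintype.card α) / Real.log 2) + 2 * ε * (Real.log (1/ε) / Real.log 2)) * Real.log 2 := by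
        field_simp

lemma main_core {W : Type*} [Fintype W] [DecidableEq W] {n : ℕ}
    (Pm : Fin n → W → ℝ) (γ : W → ℝ) (pT : Fin n → ℝ)
    (hPm0 : ∀ t a, 0 ≤ Pm t a) (hPm1 : ∀ t, ∑ a, Pm t a = 1)
    (hγ0 : ∀ w, 0 ≤ γ w) (hγ1 : ∑ w, γ w = 1)
    (hT0 : ∀ t, 0 ≤ pT t) (hT1 : ∑ t, pT t = 1)
    (ε : ℝ) (hε : ε < 1/4) (hε0 : 0 ≤ ε)
    (htvt : ∀ t, (1/2) * ∑ a, |Pm t a - γ a| ≤ ε) :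
    H2 (fun a : W => ∑ t, pT t * Pm t a) + H2 pT
      - H2 (fun z : W × Fin n => pT z.2 * Pm z.2 z.1)
      ≤ 4 * ε * (Real.logb 2 (Fintype.card W) + Real.logb 2 (1/ε)) := by
  classical
  set L : ℝ := Real.logb 2 (Fintype.card W) with hL
  set K : ℝ := Real.logb 2 (1/ε) with hK
  have hWne : Nonempty W := by
    by_contra h
    rw [not_nonempty_iff] at h
    rw [Finset.sum_of_isEmpty] at hγ1
    linarith
  have hcard1 : (1:ℝ) ≤ (Fintype.card W : ℝ) := by
    exact_mod_cast Fintype.card_pos (α := W)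
  have hL0 : 0 ≤ L := Real.logb_nonneg (by norm_num) hcard1
  set Pbar : W → ℝ := fun a => ∑ t, pT t * Pm t a with hPbar
  have hbar0 : ∀ a, 0 ≤ Pbar a := fun a =>
    Finset.sum_nonneg fun t _ => mul_nonneg (hT0 t) (hPm0 t a)
  have hbar1 : ∑ a, Pbar a = 1 := by
    rw [Finset.sum_comm]
    rw [show ∑ t, ∑ a, pT t * Pm t a = ∑ t, pT t * ∑ a, Pm t a by
      exact Finset.sum_congr rfl fun t _ => (Finset.mul_sum _ _ _).symm]
    rw [Finset.sum_congr rfl fun t _ => by rw [hPm1 t, mul_one]]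
    exact hT1
  have htvbar : (1/2) * ∑ a, |Pbar a - γ a| ≤ ε := by
    have hpt : ∀ a, |Pbar a - γ a| ≤ ∑ t, pT t * |Pm t a - γ a| := by
      intro a
      have heq : Pbar a - γ a = ∑ t, pT t * (Pm t a - γ a) := by
        simp only [mul_sub]
        rw [Finset.sum_sub_distrib, ← Finset.sum_mul, hT1, one_mul]
      rw [heq]
      refine (Finset.abs_sum_le_sum_abs _ _).trans ?_
      refine Finset.sum_le_sum fun t _ => ?_
      rw [abs_mul, abs_of_nonneg (hT0 t)]
    have h1 : ∑ a, |Pbar a - γ a| ≤ ∑ t, pT t * ∑ a, |Pm t a - γ a| := by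
      calc ∑ a, |Pbar a - γ a| ≤ ∑ a, ∑ t, pT t * |Pm t a - γ a| :=
            Finset.sum_le_sum fun a _ => hpt a
        _ = ∑ t, pT t * ∑ a, |Pm t a - γ a| := by
            rw [Finset.sum_comm]
            exact Finset.sum_congr rfl fun t _ => (Finset.mul_sum _ _ _).symm
    have h2 : ∑ t, pT t * ∑ a, |Pm t a - γ a| ≤ ∑ t, pT t * (2*ε) := by
      refine Finset.sum_le_sum fun t _ => mul_le_mul_of_nonneg_left ?_ (hT0 t)
      linarith [htvt t]
    rw [← Finset.sum_mul, hT1, one_mul] at h2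
    linarith
  -- per-t Fannes bound
  have hfq : ∀ t, H2 Pbar - H2 (Pm t) ≤ 2 * (ε * L + 2 * ε * K) := by
    intro t
    have h1 := fannes Pbar γ hbar0 hbar1 hγ0 hγ1 ε hε htvbar
    have h2 := fannes γ (Pm t) hγ0 hγ1 (hPm0 t) (hPm1 t) ε hε (by
      rw [Finset.sum_congr rfl fun a _ => abs_sub_comm (γ a) (Pm t a)]
      exact htvt t)
    rw [← hL, ← hK] at h1 h2
    linarith
  -- chain rule
  have expand : ∀ (t : Fin n) (a : W), (pT t * Pm t a) * Real.logb 2 (pT t * Pm t a)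
      = pT t * Real.logb 2 (pT t) * Pm t a + pT t * (Pm t a * Real.logb 2 (Pm t a)) := by
    intro t a
    rcases eq_or_ne (pT t) 0 with h | h
    · simp [h]
    rcases eq_or_ne (Pm t a) 0 with h2 | h2
    · simp [h2]
    rw [Real.logb_mul h h2]
    ring
  have chain : H2 (fun z : W × Fin n => pT z.2 * Pm z.2 z.1)
      = H2 pT + ∑ t, pT t * H2 (Pm t) := by
    unfold H2
    rw [Fintype.sum_prod_type, Finset.sum_comm]
    have hrow : ∀ t, ∑ a, (pT t * Pm t a) * Real.logb 2 (pT t * Pm t a)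
        = pT t * Real.logb 2 (pT t) + pT t * ∑ a, Pm t a * Real.logb 2 (Pm t a) := by
      intro t
      rw [Finset.sum_congr rfl fun a _ => expand t a, Finset.sum_add_distrib]
      congr 1
      · rw [← Finset.mul_sum, hPm1 t, mul_one]
      · rw [← Finset.mul_sum]
    rw [Finset.sum_congr rfl fun t _ => hrow t, Finset.sum_add_distrib]
    rw [neg_add]
    congr 1
    rw [← Finset.sum_neg_distrib]
    exact Finset.sum_congr rfl fun t _ => by ring
  have hsum1 : H2 Pbar + H2 pT - H2 (fun z : W × Fin n => pT z.2 * Pm z.2 z.1)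
      = ∑ t, pT t * (H2 Pbar - H2 (Pm t)) := by
    rw [chain]
    simp only [mul_sub]
    rw [Finset.sum_sub_distrib, ← Finset.sum_mul, hT1, one_mul]
    ring
  have hbound : ∑ t, pT t * (H2 Pbar - H2 (Pm t)) ≤ 2 * (ε * L + 2 * ε * K) := by
    calc ∑ t, pT t * (H2 Pbar - H2 (Pm t)) ≤ ∑ t, pT t * (2 * (ε * L + 2 * ε * K)) :=
          Finset.sum_le_sum fun t _ => mul_le_mul_of_nonneg_left (hfq t) (hT0 t)
      _ = 2 * (ε * L + 2 * ε * K) := by rw [← Finset.sum_mul, hT1, one_mul]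
  rw [hsum1]
  nlinarith [mul_nonneg hε0 hL0]

/-- If a sequence distribution is ε-close (TV, ε < 1/4) to an i.i.d. product
distribution, and T ∈ {1,…,n} is a random time index independent of W^n, then
I(W_T ; T) ≤ 4ε (log|W| + log(1/ε)) bits. -/
theorem sampled_time_info_of_near_iid {W : Type*} [Fintype W] [DecidableEq W] (n : ℕ)
    (p : (Fin n → W) → ℝ) (γ : W → ℝ) (pT : Fin n → ℝ)
    (hp0 : ∀ x, 0 ≤ p x) (hp1 : ∑ x, p x = 1)
    (hγ0 : ∀ w, 0 ≤ γ w) (hγ1 : ∑ w, γ w = 1)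
    (hT0 : ∀ t, 0 ≤ pT t) (hT1 : ∑ t, pT t = 1)
    (ε : ℝ) (hε : ε < 1/4)
    (htv : (1/2) * ∑ x, |p x - ∏ t, γ (x t)| ≤ ε) :
    H2 (fun a : W => ∑ t, pT t * ∑ x, if x t = a then p x else 0)
      + H2 pT
      - H2 (fun z : W × Fin n => pT z.2 * ∑ x, if x z.2 = z.1 then p x else 0)
      ≤ 4 * ε * (Real.logb 2 (Fintype.card W) + Real.logb 2 (1/ε)) := by
  classical
  have hε0 : 0 ≤ ε := le_trans (by positivity) htv
  set q : (Fin n → W) → ℝ := fun x => ∏ t, γ (x t) with hq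
  set Pm : Fin n → W → ℝ := fun t a => ∑ x, if x t = a then p x else 0 with hPm
  have hPm0 : ∀ t a, 0 ≤ Pm t a := by
    intro t a
    refine Finset.sum_nonneg fun x _ => ?_
    split
    · exact hp0 x
    · exact le_rfl
  have hPm1 : ∀ t, ∑ a, Pm t a = 1 := by
    intro t
    rw [show ∑ a, Pm t a = ∑ a, ∑ x, if x t = a then p x else 0 from rfl, Finset.sum_comm]
    rw [Finset.sum_congr rfl fun x _ => Finset.sum_ite_eq Finset.univ (x t) (fun _ => p x)]
    simpa using hp1
  have hmargq : ∀ (t : Fin n) (a : W), (∑ x, if x t = a then q x else 0) = γ a := by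
    intro t a
    have hx : ∀ x : Fin n → W, (if x t = a then q x else 0)
        = ∏ s, (if s = t then (if x s = a then γ (x s) else 0) else γ (x s)) := by
      intro x
      by_cases h : x t = a
      · rw [if_pos h]
        refine Finset.prod_congr rfl fun s _ => ?_
        split_ifs with h1 h2
        · rfl
        · exact absurd (h1 ▸ h) h2
        · rfl
      · rw [if_neg h]
        symm
        apply Finset.prod_eq_zero (Finset.mem_univ t)
        simp [h]
    rw [Finset.sum_congr rfl fun x _ => hx x,
      ← Fintype.prod_sum (κ := fun _ : Fin n => W)
        (fun s w => if s = t then (if w = a then γ w else 0) else γ w)]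
    have hrow : ∀ s : Fin n, (∑ w, if s = t then (if w = a then γ w else 0) else γ w)
        = if s = t then γ a else 1 := by
      intro s
      split_ifs with h
      · simp
      · exact hγ1
    rw [Finset.prod_congr rfl fun s _ => hrow s]
    simp
  have htvt : ∀ t, (1/2) * ∑ a, |Pm t a - γ a| ≤ ε := by
    intro t
    have hdiff : ∀ a, Pm t a - γ a = ∑ x, (if x t = a then p x - q x else 0) := by
      intro a
      rw [← hmargq t a, show Pm t a = ∑ x, if x t = a then p x else 0 from rfl,
        ← Finset.sum_sub_distrib]
      refine Finset.sum_congr rfl fun x _ => ?_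
      split_ifs <;> simp
    have h1 : ∑ a, |Pm t a - γ a| ≤ ∑ x, |p x - q x| := by
      calc ∑ a, |Pm t a - γ a|
          ≤ ∑ a, ∑ x, |if x t = a then p x - q x else 0| := by
            refine Finset.sum_le_sum fun a _ => ?_
            rw [hdiff a]
            exact Finset.abs_sum_le_sum_abs _ _
        _ = ∑ x, ∑ a, (if x t = a then |p x - q x| else 0) := by
            rw [Finset.sum_comm]
            refine Finset.sum_congr rfl fun x _ => Finset.sum_congr rfl fun a _ => ?_
            split_ifs <;> simp
        _ = ∑ x, |p x - q x| := by
            rw [Finset.sum_congr rfl fun x _ =>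
              Finset.sum_ite_eq Finset.univ (x t) (fun _ => |p x - q x|)]
            simp
    linarith [htv]
  exact main_core Pm γ pT hPm0 hPm1 hγ0 hγ1 hT0 hT1 ε hε hε0 htvt
end

section
/- (Cardinality bound via Carathéodory) For any discrete random variables (X, Y, W) with finite alphabets forming a Markov chain X − W − Y, there exists a joint distribution on (X, Y, U) forming a Markov chain X − U − Y with |U| ≤ |X||Y| + 1, having the same marginal on (X,Y), and satisfying I(X;U) = I(X;W) and I(X,Y;U) = I(X,Y;W). -/
open Finset

noncomputable def ent (t : ℝ) : ℝ := t * Real.logb 2 t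

lemma ent_zero : ent 0 = 0 := by simp [ent]

lemma ent_cont : Continuous ent := by
  have : ent = fun t => (t * Real.log t) * (Real.log 2)⁻¹ := by
    funext t; simp [ent, Real.logb, div_eq_mul_inv]; ring
  rw [this]; exact Real.continuous_mul_log.mul continuous_const

lemma ent_mul {r s : ℝ} (hr : 0 ≤ r) (hs : 0 ≤ s) :
    ent (r * s) = s * ent r + r * ent s := by
  rcases eq_or_lt_of_le hr with h | h
  · simp [ent, ← h]
  rcases eq_or_lt_of_le hs with h' | h'
  · simp [ent, ← h']
  simp only [ent, Real.logb_mul h.ne' h'.ne']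
  ring

lemma ent_div {s r : ℝ} (hs : 0 ≤ s) (hr : 0 < r) :
    r * ent (s / r) = ent s - (s / r) * ent r := by
  rcases eq_or_lt_of_le hs with h | h
  · simp [ent, ← h]
  have : Real.logb 2 (s / r) = Real.logb 2 s - Real.logb 2 r :=
    Real.logb_div h.ne' hr.ne'
  have e : r * (s / r) = s := mul_div_cancel₀ s hr.ne'
  have e' : s / r * r = s := div_mul_cancel₀ s hr.ne'
  simp only [ent, this]
  linear_combination (Real.logb 2 s - Real.logb 2 r) * e + Real.logb 2 r * e'

section Part1



variable {F E : Type*} [NormedAddCommGroup F] [NormedSpace ℝ F]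
  [NormedAddCommGroup E] [NormedSpace ℝ E] [FiniteDimensional ℝ E]

lemma sum_castLE {M : Type*} [AddCommMonoid M] {n N : ℕ} (hnN : n ≤ N) (f : Fin N → M)
    (hf : ∀ u : Fin N, ¬ ((u : ℕ) < n) → f u = 0) :
    ∑ u, f u = ∑ i : Fin n, f (Fin.castLE hnN i) := by
  have himg : ∑ u ∈ Finset.univ.image (Fin.castLE hnN), f u = ∑ i : Fin n, f (Fin.castLE hnN i) :=
    Finset.sum_image (by intro a _ b _ hab; exact Fin.castLE_injective hnN hab)
  rw [← himg]
  symm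
  apply Finset.sum_subset (Finset.subset_univ _)
  intro u _ hu
  apply hf
  intro hlt
  exact hu (Finset.mem_image.2 ⟨⟨(u : ℕ), hlt⟩, Finset.mem_univ _, by ext; simp⟩)

lemma pad_rep {D : Set F} (hDne : D.Nonempty) {Φ : F → E} {x : E} {n N : ℕ} (hnN : n ≤ N)
    (h : ∃ (μ : Fin n → ℝ) (d : Fin n → F), (∀ i, 0 ≤ μ i) ∧ (∑ i, μ i = 1) ∧
      (∀ i, d i ∈ D) ∧ ∑ i, μ i • Φ (d i) = x) :
    ∃ (μ : Fin N → ℝ) (d : Fin N → F), (∀ i, 0 ≤ μ i) ∧ (∑ i, μ i = 1) ∧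
      (∀ i, d i ∈ D) ∧ ∑ i, μ i • Φ (d i) = x := by
  obtain ⟨d₀, hd₀⟩ := hDne
  obtain ⟨μ, d, h0, h1, hD, hx⟩ := h
  refine ⟨fun u => if h : (u : ℕ) < n then μ ⟨u, h⟩ else 0,
          fun u => if h : (u : ℕ) < n then d ⟨u, h⟩ else d₀, ?_, ?_, ?_, ?_⟩
  · intro u; dsimp only; split
    · exact h0 _
    · exact le_rfl
  · rw [sum_castLE hnN _ (by intro u hu; simp [hu])]
    simpa using h1
  · intro u; dsimp only; split
    · exact hD _
    · exact hd₀
  · rw [sum_castLE hnN _ (by intro u hu; simp [hu])]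
    simpa using hx

set_option maxHeartbeats 1000000 in
lemma caratheodory_path {N : ℕ} (hN : 1 ≤ N) (hdim : Module.finrank ℝ E = N + 1)
    (ℓ : E →ₗ[ℝ] ℝ) {D : Set F} (hD : Convex ℝ D) {Φ : F → E} (hΦ : Continuous Φ)
    (hΦℓ : ∀ d ∈ D, ℓ (Φ d) = 1) {x : E} (hx : x ∈ convexHull ℝ (Φ '' D)) :
    ∃ (μ : Fin N → ℝ) (d : Fin N → F), (∀ i, 0 ≤ μ i) ∧ (∑ i, μ i = 1) ∧
      (∀ i, d i ∈ D) ∧ ∑ i, μ i • Φ (d i) = x := by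
  classical
  -- D is nonempty
  rcases D.eq_empty_or_nonempty with hDe | hDne
  · rw [hDe] at hx; simp [convexHull_empty] at hx
  obtain ⟨ι, hι, z, w, hzT, hai, hw0, hw1, hzx⟩ := eq_pos_convex_span_of_mem_convexHull hx
  -- the linear functional on E × ℝ cutting out the homogenized hyperplane
  set L : (E × ℝ) →ₗ[ℝ] ℝ := (ℓ.comp (LinearMap.fst ℝ E ℝ)) - (LinearMap.snd ℝ E ℝ) with hL
  have hLval : ∀ (e : E) (t : ℝ), L (e, t) = ℓ e - t := by intro e t; simp [hL]
  have hLsurj : LinearMap.range L = ⊤ := by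
    rw [LinearMap.range_eq_top]
    intro r
    exact ⟨(0, -r), by simp [hLval]⟩
  have hK : Module.finrank ℝ (LinearMap.ker L) = N + 1 := by
    have h1 := LinearMap.finrank_range_add_finrank_ker L
    rw [hLsurj] at h1
    simp only [finrank_top, Module.finrank_self] at h1
    rw [Module.finrank_prod, hdim, Module.finrank_self] at h1
    omega
  have hℓz : ∀ i, ℓ (z i) = 1 := by
    intro i
    obtain ⟨d, hd, hΦd⟩ := hzT (Set.mem_range_self i)
    rw [← hΦd]; exact hΦℓ d hd
  have hzK : ∀ i, ((z i, (1:ℝ)) : E × ℝ) ∈ LinearMap.ker L := by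
    intro i; rw [LinearMap.mem_ker, hLval, hℓz i]; ring
  -- linear independence of the homogenized family
  have lihat : LinearIndependent ℝ (fun i => (⟨(z i, 1), hzK i⟩ : LinearMap.ker L)) := by
    rw [Fintype.linearIndependent_iff]
    intro g hg
    have hg' : ∑ i, g i • ((z i, (1:ℝ)) : E × ℝ) = 0 := by
      have := congrArg (Submodule.subtype (LinearMap.ker L)) hg
      rw [map_sum] at this
      simpa using this
    have h1 : ∑ i, g i • z i = 0 := by
      have := congrArg Prod.fst hg'
      rw [Prod.fst_sum] at this
      simpa using this
    have h2 : ∑ i, g i = 0 := by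
      have := congrArg Prod.snd hg'
      rw [Prod.snd_sum] at this
      simpa using this
    intro i
    exact affineIndependent_iff.1 hai univ g h2 h1 i (mem_univ i)
  have cardle : Fintype.card ι ≤ N + 1 := by
    have := lihat.fintype_card_le_finrank
    rwa [hK] at this
  -- choose preimages in D
  have hzim : ∀ i, ∃ d, d ∈ D ∧ Φ d = z i := by
    intro i
    obtain ⟨d, hd, hΦd⟩ := hzT (Set.mem_range_self i)
    exact ⟨d, hd, hΦd⟩
  choose dp hdpD hdpΦ using hzim
  by_cases hc : Fintype.card ι ≤ N
  · -- easy case: already few enough points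
    apply pad_rep hDne hc
    set e := Fintype.equivFin ι with he
    refine ⟨fun k => w (e.symm k), fun k => dp (e.symm k), fun k => (hw0 _).le, ?_, fun k => hdpD _, ?_⟩
    · rw [Equiv.sum_comp e.symm w]; exact hw1
    · calc ∑ k, w (e.symm k) • Φ (dp (e.symm k))
          = ∑ k, (fun i => w i • z i) (e.symm k) := by simp_rw [hdpΦ]
        _ = ∑ i, w i • z i := by simpa using Equiv.sum_comp e.symm fun i => w i • z i
        _ = x := hzx
  · -- hard case: exactly N+2 points; use connectedness to drop one
    have hcard : Fintype.card ι = N + 1 := le_antisymm cardle (by omega)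
    set e := Fintype.equivFinOfCardEq hcard with he
    set z' : Fin (N+1) → E := z ∘ e.symm with hz'
    set w' : Fin (N+1) → ℝ := w ∘ e.symm with hw'
    set dp' : Fin (N+1) → F := dp ∘ e.symm with hdp'
    have hw0' : ∀ k, 0 < w' k := fun k => hw0 _
    have hw1' : ∑ k, w' k = 1 := by
      rw [hw']; rw [show ∑ k, (w ∘ e.symm) k = ∑ i, w i from Equiv.sum_comp e.symm w]; exact hw1
    have hzx' : ∑ k, w' k • z' k = x := by
      rw [show ∑ k, w' k • z' k = ∑ i, w i • z i by
        simpa [hw', hz'] using Equiv.sum_comp e.symm fun i => w i • z i]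
      exact hzx
    have hdpD' : ∀ k, dp' k ∈ D := fun k => hdpD _
    have hdpΦ' : ∀ k, Φ (dp' k) = z' k := fun k => hdpΦ _
    have hzK' : ∀ k, ((z' k, (1:ℝ)) : E × ℝ) ∈ LinearMap.ker L := fun k => hzK _
    have lihat' : LinearIndependent ℝ (fun k => (⟨(z' k, 1), hzK' k⟩ : LinearMap.ker L)) := by
      have h2 := lihat.comp e.symm e.symm.injective
      exact h2
    have hcardfin : Fintype.card (Fin (N+1)) = Module.finrank ℝ (LinearMap.ker L) := by
      simp [hK]
    set B : Module.Basis (Fin (N+1)) ℝ (LinearMap.ker L) :=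
      basisOfLinearIndependentOfCardEqFinrank lihat' hcardfin with hBdef
    have hB : ∀ k, (B k : E × ℝ) = (z' k, 1) := by
      intro k
      rw [hBdef, coe_basisOfLinearIndependentOfCardEqFinrank]
    -- clamped straight path between the first two chosen parameters
    set σ : ℝ → ℝ := fun s => min (max s 0) 1 with hσ
    have hσc : Continuous σ := (continuous_id.max continuous_const).min continuous_const
    have hσ0 : σ 0 = 0 := by norm_num [hσ]
    have hσ1 : σ 1 = 1 := by norm_num [hσ]
    have hσmem : ∀ s, 0 ≤ σ s ∧ σ s ≤ 1 := fun s =>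
      ⟨le_min (le_max_right _ _) zero_le_one, min_le_right _ _⟩
    set path : ℝ → F := fun s => (1 - σ s) • dp' 0 + σ s • dp' 1 with hpath
    have hpathD : ∀ s, path s ∈ D := fun s =>
      hD (hdpD' 0) (hdpD' 1) (by linarith [(hσmem s).1, (hσmem s).2]) (hσmem s).1 (by ring)
    set γ : ℝ → E := fun s => Φ (path s) with hγdef
    have hγK : ∀ s, ((γ s, (1:ℝ)) : E × ℝ) ∈ LinearMap.ker L := by
      intro s; rw [LinearMap.mem_ker, hLval, hΦℓ _ (hpathD s)]; ring
    set c : ℝ → Fin (N+1) → ℝ := fun s => B.equivFun ⟨(γ s, 1), hγK s⟩ with hcdef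
    have hγc : ∀ s, ((γ s, (1:ℝ)) : E × ℝ) = ∑ k, c s k • ((z' k, 1) : E × ℝ) := by
      intro s
      have h := B.sum_equivFun ⟨(γ s, 1), hγK s⟩
      have h2 := congrArg (Submodule.subtype (LinearMap.ker L)) h
      rw [map_sum] at h2
      simp only [Submodule.coe_subtype, SetLike.val_smul] at h2
      rw [← h2]
      apply Finset.sum_congr rfl
      intro k _
      rw [hB k]
    have hγc1 : ∀ s, γ s = ∑ k, c s k • z' k := by
      intro s
      have h2 := congrArg Prod.fst (hγc s)
      rw [Prod.fst_sum] at h2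
      simpa using h2
    have hcsum1 : ∀ s, ∑ k, c s k = 1 := by
      intro s
      have h2 := congrArg Prod.snd (hγc s)
      rw [Prod.snd_sum] at h2
      simpa [smul_eq_mul] using h2.symm
    have hccont : ∀ k, Continuous fun s => c s k := by
      intro k
      have h1 : Continuous γ :=
        hΦ.comp (((continuous_const.sub hσc).smul continuous_const).add
          (hσc.smul continuous_const))
      have h2 : Continuous fun s => (⟨(γ s, 1), hγK s⟩ : LinearMap.ker L) :=
        Continuous.subtype_mk (h1.prodMk continuous_const) _
      have h3 : Continuous (B.equivFun.toLinearMap) :=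
        LinearMap.continuous_of_finiteDimensional _
      exact (continuous_apply k).comp ((h3.comp h2 : Continuous fun s => B.equivFun.toLinearMap _))
    have hγ0 : γ 0 = z' 0 := by
      have hp0 : path 0 = dp' 0 := by simp only [hpath, hσ0]; simp
      show Φ (path 0) = z' 0
      rw [hp0]; exact hdpΦ' 0
    have hγ1 : γ 1 = z' 1 := by
      have hp1 : path 1 = dp' 1 := by simp only [hpath, hσ1]; simp
      show Φ (path 1) = z' 1
      rw [hp1]; exact hdpΦ' 1
    have hc0 : ∀ k, c 0 k = if (0 : Fin (N+1)) = k then 1 else 0 := by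
      have hsub : (⟨(γ 0, 1), hγK 0⟩ : LinearMap.ker L) = B 0 := by
        apply Subtype.ext
        show ((γ 0, (1:ℝ)) : E × ℝ) = ↑(B 0)
        rw [hB 0, hγ0]
      intro k
      rw [hcdef]; dsimp only
      rw [hsub, Module.Basis.equivFun_self]
    have hc1' : ∀ k, c 1 k = if (1 : Fin (N+1)) = k then 1 else 0 := by
      have hsub : (⟨(γ 1, 1), hγK 1⟩ : LinearMap.ker L) = B 1 := by
        apply Subtype.ext
        show ((γ 1, (1:ℝ)) : E × ℝ) = ↑(B 1)
        rw [hB 1, hγ1]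
      intro k
      rw [hcdef]; dsimp only
      rw [hsub, Module.Basis.equivFun_self]
    have h10 : (1 : Fin (N+1)) ≠ 0 := by
      simp only [ne_eq, Fin.ext_iff, Fin.val_one', Fin.val_zero]
      rw [Nat.mod_eq_of_lt (by omega)]
      omega
    have hne : (univ.erase (0 : Fin (N+1))).Nonempty :=
      ⟨1, mem_erase.2 ⟨h10, mem_univ _⟩⟩
    set f : Fin (N+1) → ℝ → ℝ := fun i s => w' i * c s 0 - w' 0 * c s i with hf
    set g : ℝ → ℝ := fun s => (univ.erase (0 : Fin (N+1))).inf' hne (fun i => f i s) with hg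
    have hgcont : Continuous g :=
      Continuous.finset_inf'_apply hne
        (fun i _ => (continuous_const.mul (hccont 0)).sub (continuous_const.mul (hccont i)))
    have hg0 : 0 < g 0 := by
      have hkey : ∀ i ∈ univ.erase (0 : Fin (N+1)), 0 < f i 0 := by
        intro i hi
        have hi0 : (0 : Fin (N+1)) ≠ i := fun h => (mem_erase.1 hi).1 h.symm
        have hval : f i 0 = w' i := by
          simp only [hf, hc0 0, hc0 i, if_pos rfl, if_neg hi0]
          simp
        rw [hval]; exact hw0' i
      simp only [hg]
      rw [Finset.lt_inf'_iff]
      exact hkey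
    have hg1 : g 1 ≤ -(w' 0) := by
      have hle := Finset.inf'_le (fun i => f i 1) (mem_erase.2 ⟨h10, mem_univ (1 : Fin (N+1))⟩)
      have hval : f 1 1 = -(w' 0) := by
        simp only [hf, hc1' 0, hc1' 1, if_pos rfl, if_neg h10]
        simp
      simp only [hg]
      exact hval ▸ hle
    obtain ⟨s', hs'mem, hgs'⟩ : ∃ s ∈ Set.Icc (0:ℝ) 1, g s = 0 := by
      have h0m : (0:ℝ) ∈ Set.Icc (g 1) (g 0) := ⟨by linarith [hw0' 0], le_of_lt hg0⟩
      obtain ⟨s, hs, hgs⟩ := intermediate_value_Icc' zero_le_one hgcont.continuousOn h0m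
      exact ⟨s, hs, hgs⟩
    have hhge : ∀ i ∈ univ.erase (0 : Fin (N+1)), 0 ≤ f i s' := by
      intro i hi
      have h2 := Finset.inf'_le (fun i => f i s') hi
      have h3 : (univ.erase (0 : Fin (N+1))).inf' hne (fun i => f i s') = 0 := hgs'
      rw [h3] at h2
      exact h2
    obtain ⟨j, hj, hjval⟩ := Finset.exists_mem_eq_inf' hne (fun i => f i s')
    have hfj : f j s' = 0 := by
      rw [← hjval]; exact hgs'
    have hj0 : j ≠ 0 := (mem_erase.1 hj).1
    set c0 : ℝ := c s' 0 with hc0def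
    have hsumh : ∑ i ∈ univ.erase (0 : Fin (N+1)), f i s' = c0 - w' 0 := by
      have e1 : ∑ i ∈ univ.erase (0 : Fin (N+1)), w' i = 1 - w' 0 := by
        rw [Finset.sum_erase_eq_sub (mem_univ _), hw1']
      have e2 : ∑ i ∈ univ.erase (0 : Fin (N+1)), c s' i = 1 - c0 := by
        rw [Finset.sum_erase_eq_sub (mem_univ _), hcsum1]
      rw [hf]; dsimp only
      rw [Finset.sum_sub_distrib, ← Finset.sum_mul, ← Finset.mul_sum, e1, e2]
      ring
    have hc0pos : 0 < c0 := by
      have hs : 0 ≤ ∑ i ∈ univ.erase (0 : Fin (N+1)), f i s' := Finset.sum_nonneg hhge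
      have := hw0' 0
      linarith [hsumh ▸ hs]
    set ν : Fin (N+1) → ℝ := fun i => if i = 0 then w' 0 / c0 else f i s' / c0 with hν
    set Pt : Fin (N+1) → F := fun i => if i = 0 then path s' else dp' i with hPt
    have hPtD : ∀ i, Pt i ∈ D := by
      intro i; rw [hPt]; dsimp only; split
      · exact hpathD s'
      · exact hdpD' i
    have hΦPt : ∀ i, Φ (Pt i) = if i = 0 then γ s' else z' i := by
      intro i; rw [hPt]; dsimp only; split
      · rfl
      · exact hdpΦ' i
    have hν0 : ∀ i, 0 ≤ ν i := by
      intro i; rw [hν]; dsimp only; split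
      · exact div_nonneg (hw0' 0).le hc0pos.le
      · next hi => exact div_nonneg (hhge i (mem_erase.2 ⟨hi, mem_univ _⟩)) hc0pos.le
    have hνj : ν j = 0 := by
      rw [hν]; dsimp only
      rw [if_neg hj0, hfj, zero_div]
    have hν1 : ∑ i, ν i = 1 := by
      rw [← Finset.add_sum_erase _ ν (mem_univ (0 : Fin (N+1)))]
      have h2 : ∑ i ∈ univ.erase (0 : Fin (N+1)), ν i = (c0 - w' 0) / c0 := by
        rw [← hsumh, Finset.sum_div]
        apply Finset.sum_congr rfl
        intro i hi
        rw [hν]; dsimp only; rw [if_neg (mem_erase.1 hi).1]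
      rw [h2, hν]; dsimp only
      rw [if_pos rfl]
      field_simp
      ring
    have hνx : ∑ i, ν i • Φ (Pt i) = x := by
      have step1 : ∑ i, ν i • Φ (Pt i)
          = (w' 0 / c0) • γ s' + ∑ i ∈ univ.erase (0 : Fin (N+1)), (f i s' / c0) • z' i := by
        rw [← Finset.add_sum_erase _ (fun i => ν i • Φ (Pt i)) (mem_univ (0 : Fin (N+1)))]
        congr 1
        · apply Finset.sum_congr rfl
          intro i hi
          show ν i • Φ (Pt i) = (f i s' / c0) • z' i
          rw [hΦPt i]
          simp [hν, (mem_erase.1 hi).1]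
        all_goals try (show ν 0 • Φ (Pt 0) = (w' 0 / c0) • γ s'; rw [hΦPt 0]; simp [hν])
      rw [step1, hγc1 s', Finset.smul_sum]
      simp_rw [smul_smul]
      rw [← Finset.add_sum_erase _ (fun k => (w' 0 / c0 * c s' k) • z' k)
        (mem_univ (0 : Fin (N+1)))]
      rw [add_assoc, ← Finset.sum_add_distrib]
      have hco : (w' 0 / c0 * c s' 0) • z' 0 = w' 0 • z' 0 := by
        congr 1
        rw [← hc0def]
        field_simp
      rw [hco]
      have hrest : ∑ i ∈ univ.erase (0 : Fin (N+1)),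
          ((w' 0 / c0 * c s' i) • z' i + (f i s' / c0) • z' i)
          = ∑ i ∈ univ.erase (0 : Fin (N+1)), w' i • z' i := by
        apply Finset.sum_congr rfl
        intro i hi
        rw [← add_smul]
        congr 1
        rw [hf]; dsimp only
        field_simp
        try ring
      rw [hrest, Finset.add_sum_erase _ (fun i => w' i • z' i) (mem_univ (0 : Fin (N+1)))]
      exact hzx'
    -- drop the vanished point j and reindex over Fin N
    refine ⟨fun k => ν (j.succAbove k), fun k => Pt (j.succAbove k),
      fun k => hν0 _, ?_, fun k => hPtD _, ?_⟩
    · have h2 := Fin.sum_univ_succAbove ν j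
      rw [hν1, hνj] at h2
      linarith [h2]
    · have h2 := Fin.sum_univ_succAbove (fun i => ν i • Φ (Pt i)) j
      rw [hνx, hνj, zero_smul, zero_add] at h2
      exact h2.symm

end Part1

section Part2

variable (X Y : Type*) [Fintype X] [Fintype Y]

/-- the map sending a pair of pmfs to (product distribution, ∑ ent a, ∑ ent b). -/
noncomputable def Phi : ((X → ℝ) × (Y → ℝ)) → ((X → Y → ℝ) × ℝ × ℝ) :=
  fun ab => (fun x y => ab.1 x * ab.2 y, ∑ x, ent (ab.1 x), ∑ y, ent (ab.2 y))

def Dset : Set ((X → ℝ) × (Y → ℝ)) := (stdSimplex ℝ X) ×ˢ (stdSimplex ℝ Y)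

noncomputable def ellXY : ((X → Y → ℝ) × ℝ × ℝ) →ₗ[ℝ] ℝ where
  toFun e := ∑ x, ∑ y, e.1 x y
  map_add' e f := by simp [Finset.sum_add_distrib]
  map_smul' r e := by simp [Finset.mul_sum]

lemma ent_cont' : Continuous ent := by
  have h : ent = fun t => (t * Real.log t) * (Real.log 2)⁻¹ := by
    funext t; simp [ent, Real.logb, div_eq_mul_inv]; ring
  rw [h]; exact Real.continuous_mul_log.mul continuous_const

lemma Phi_cont : Continuous (Phi X Y) := by
  refine Continuous.prodMk ?_ (Continuous.prodMk ?_ ?_)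
  · apply continuous_pi; intro x; apply continuous_pi; intro y
    exact ((continuous_apply x).comp continuous_fst).mul
      ((continuous_apply y).comp continuous_snd)
  · apply continuous_finset_sum; intro x _
    exact ent_cont'.comp ((continuous_apply x).comp continuous_fst)
  · apply continuous_finset_sum; intro y _
    exact ent_cont'.comp ((continuous_apply y).comp continuous_snd)

lemma Dset_convex : Convex ℝ (Dset X Y) :=
  (convex_stdSimplex ℝ X).prod (convex_stdSimplex ℝ Y)

lemma ell_Phi : ∀ d ∈ Dset X Y, ellXY X Y (Phi X Y d) = 1 := by
  rintro ⟨a, b⟩ ⟨ha, hb⟩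
  show ∑ x, ∑ y, a x * b y = 1
  have h1 : ∀ x, ∑ y, a x * b y = a x := by
    intro x; rw [← Finset.mul_sum, hb.2, mul_one]
  rw [Finset.sum_congr rfl fun x _ => h1 x, ha.2]

lemma finrank_E : Module.finrank ℝ ((X → Y → ℝ) × ℝ × ℝ)
    = Fintype.card X * Fintype.card Y + 2 := by
  rw [Module.finrank_prod, Module.finrank_prod, Module.finrank_self]
  have h1 : Module.finrank ℝ (X → Y → ℝ) = Fintype.card X * Fintype.card Y := by
    rw [Module.finrank_pi_fintype]
    have : ∀ x : X, Module.finrank ℝ (Y → ℝ) = Fintype.card Y := fun _ => Module.finrank_pi ℝ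
    rw [Finset.sum_congr rfl fun x _ => this x]
    simp [mul_comm]
  rw [h1]

end Part2

lemma exists_rep {X Y : Type*} [Fintype X] [Fintype Y] [Nonempty X] [Nonempty Y]
    (v : (X → Y → ℝ) × ℝ × ℝ) (hv : v ∈ convexHull ℝ (Phi X Y '' Dset X Y)) :
    ∃ (μ : Fin (Fintype.card X * Fintype.card Y + 1) → ℝ)
      (a : Fin (Fintype.card X * Fintype.card Y + 1) → X → ℝ)
      (b : Fin (Fintype.card X * Fintype.card Y + 1) → Y → ℝ),
      (∀ i, 0 ≤ μ i) ∧ (∑ i, μ i = 1) ∧ (∀ i, a i ∈ stdSimplex ℝ X) ∧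
      (∀ i, b i ∈ stdSimplex ℝ Y) ∧ ∑ i, μ i • Phi X Y (a i, b i) = v := by
  obtain ⟨μ, d, h0, h1, hd, hx⟩ :=
    caratheodory_path (N := Fintype.card X * Fintype.card Y + 1)
      (Nat.le_add_left 1 _) (by rw [finrank_E]) (ellXY X Y) (Dset_convex X Y)
      (Phi_cont X Y) (ell_Phi X Y) hv
  refine ⟨μ, fun i => (d i).1, fun i => (d i).2, h0, h1,
    fun i => (Set.mem_prod.1 (hd i)).1, fun i => (Set.mem_prod.1 (hd i)).2, ?_⟩
  rw [← hx]

lemma H2_ent {α : Type*} [Fintype α] (P : α → ℝ) : H2 P = -∑ a, ent (P a) := rfl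

/-- Cardinality bound via Carathéodory: for any Markov chain X − W − Y on finite
alphabets, there is a joint distribution on (X,Y,U) with X − U − Y Markov, |U| ≤ |X||Y|+1, the
same (X,Y)-marginal, and the same values of I(X;U)=I(X;W) and I(X,Y;U)=I(X,Y;W). -/
theorem cardinality_bound {X Y W : Type*} [Fintype X] [Fintype Y] [Fintype W]
    (p : X → Y → W → ℝ)
    (hp0 : ∀ x y w, 0 ≤ p x y w)
    (hp1 : ∑ x, ∑ y, ∑ w, p x y w = 1)
    (hMarkov : ∀ x y w,
      (∑ x', ∑ y', p x' y' w) * p x y w = (∑ y', p x y' w) * (∑ x', p x' y w)) :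
    ∃ q : X → Y → Fin (Fintype.card X * Fintype.card Y + 1) → ℝ,
      (∀ x y u, 0 ≤ q x y u) ∧
      (∑ x, ∑ y, ∑ u, q x y u = 1) ∧
      (∀ x y u,
        (∑ x', ∑ y', q x' y' u) * q x y u = (∑ y', q x y' u) * (∑ x', q x' y u)) ∧
      (∀ x y, ∑ u, q x y u = ∑ w, p x y w) ∧
      (H2 (fun x => ∑ y, ∑ u, q x y u) + H2 (fun u => ∑ x, ∑ y, q x y u)
          - H2 (fun s : X × Fin (Fintype.card X * Fintype.card Y + 1) => ∑ y, q s.1 y s.2)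
        = H2 (fun x => ∑ y, ∑ w, p x y w) + H2 (fun w => ∑ x, ∑ y, p x y w)
          - H2 (fun s : X × W => ∑ y, p s.1 y s.2)) ∧
      (H2 (fun s : X × Y => ∑ u, q s.1 s.2 u) + H2 (fun u => ∑ x, ∑ y, q x y u)
          - H2 (fun s : (X × Y) × Fin (Fintype.card X * Fintype.card Y + 1) =>
              q s.1.1 s.1.2 s.2)
        = H2 (fun s : X × Y => ∑ w, p s.1 s.2 w) + H2 (fun w => ∑ x, ∑ y, p x y w)
          - H2 (fun s : (X × Y) × W => p s.1.1 s.1.2 s.2)) := by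
  classical
  -- nonemptiness of the alphabets
  have hXne : Nonempty X := by
    by_contra h
    rw [not_nonempty_iff] at h
    rw [Finset.univ_eq_empty, Finset.sum_empty] at hp1
    norm_num at hp1
  have hYne : Nonempty Y := by
    by_contra h
    rw [not_nonempty_iff] at h
    have : ∀ x : X, ∑ y, ∑ w, p x y w = 0 := by
      intro x; rw [Finset.univ_eq_empty, Finset.sum_empty]
    rw [Finset.sum_congr rfl fun x _ => this x] at hp1
    norm_num at hp1
  -- marginals
  set P : W → ℝ := fun w => ∑ x, ∑ y, p x y w with hPdef
  set A : W → X → ℝ := fun w x => ∑ y, p x y w with hAdef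
  set Bb : W → Y → ℝ := fun w y => ∑ x, p x y w with hBdef
  have hP0 : ∀ w, 0 ≤ P w :=
    fun w => Finset.sum_nonneg fun x _ => Finset.sum_nonneg fun y _ => hp0 x y w
  have hA0 : ∀ w x, 0 ≤ A w x := fun w x => Finset.sum_nonneg fun y _ => hp0 x y w
  have hB0 : ∀ w y, 0 ≤ Bb w y := fun w y => Finset.sum_nonneg fun x _ => hp0 x y w
  have hAP : ∀ w, ∑ x, A w x = P w := fun w => rfl
  have hBP : ∀ w, ∑ y, Bb w y = P w := fun w => Finset.sum_comm
  have hPzero : ∀ w, P w = 0 → ∀ x y, p x y w = 0 := by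
    intro w hw x y
    have h1 : ∑ x', A w x' = 0 := (hAP w).trans hw
    have h2 : A w x = 0 :=
      (Finset.sum_eq_zero_iff_of_nonneg (fun x' _ => hA0 w x')).1 h1 x (mem_univ x)
    exact (Finset.sum_eq_zero_iff_of_nonneg (fun y' _ => hp0 x y' w)).1 h2 y (mem_univ y)
  have hM : ∀ x y w, P w * p x y w = A w x * Bb w y := fun x y w => hMarkov x y w
  have hPsum : ∑ w, P w = 1 := by
    rw [← hp1]
    rw [Finset.sum_comm (f := fun w x => ∑ y, p x y w)]
    apply Finset.sum_congr rfl
    intro x _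
    exact Finset.sum_comm
  -- the conditional distributions (with junk at zero-mass w)
  set aw : W → X → ℝ := fun w => if 0 < P w then (fun x => A w x / P w)
    else (fun _ => ((Fintype.card X : ℝ))⁻¹) with hawdef
  set bw : W → Y → ℝ := fun w => if 0 < P w then (fun y => Bb w y / P w)
    else (fun _ => ((Fintype.card Y : ℝ))⁻¹) with hbwdef
  have hcardX : (0:ℝ) < (Fintype.card X : ℝ) := by
    have := Fintype.card_pos_iff.2 hXne; positivity
  have hcardY : (0:ℝ) < (Fintype.card Y : ℝ) := by
    have := Fintype.card_pos_iff.2 hYne; positivity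
  have hawS : ∀ w, aw w ∈ stdSimplex ℝ X := by
    intro w
    rw [hawdef]; dsimp only; split
    · next hw => exact ⟨fun x => div_nonneg (hA0 w x) (hP0 w),
        by rw [← Finset.sum_div, hAP w, div_self hw.ne']⟩
    · exact ⟨fun x => by positivity,
        by rw [Finset.sum_const, Finset.card_univ, nsmul_eq_mul, mul_inv_cancel₀ hcardX.ne']⟩
  have hbwS : ∀ w, bw w ∈ stdSimplex ℝ Y := by
    intro w
    rw [hbwdef]; dsimp only; split
    · next hw => exact ⟨fun y => div_nonneg (hB0 w y) (hP0 w),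
        by rw [← Finset.sum_div, hBP w, div_self hw.ne']⟩
    · exact ⟨fun y => by positivity,
        by rw [Finset.sum_const, Finset.card_univ, nsmul_eq_mul, mul_inv_cancel₀ hcardY.ne']⟩
  -- the target point
  set M : X → Y → ℝ := fun x y => ∑ w, p x y w with hMdef
  set F1 : ℝ := ∑ w, ∑ x, ent (A w x) - ∑ w, ent (P w) with hF1def
  set F2 : ℝ := ∑ w, ∑ y, ent (Bb w y) - ∑ w, ent (P w) with hF2def
  have hkey : ∀ w, P w • Phi X Y (aw w, bw w)
      = ((fun x y => p x y w), ∑ x, ent (A w x) - ent (P w),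
         ∑ y, ent (Bb w y) - ent (P w)) := by
    intro w
    by_cases hw : 0 < P w
    · have haw' : aw w = fun x => A w x / P w := by rw [hawdef]; dsimp only; rw [if_pos hw]
      have hbw' : bw w = fun y => Bb w y / P w := by rw [hbwdef]; dsimp only; rw [if_pos hw]
      rw [haw', hbw']
      refine Prod.ext ?_ (Prod.ext ?_ ?_)
      · show (P w • fun x y => A w x / P w * (Bb w y / P w)) = fun x y => p x y w
        funext x y
        show P w * (A w x / P w * (Bb w y / P w)) = p x y w
        rw [div_mul_div_comm, ← hM x y w]
        field_simp
      · show P w * ∑ x, ent (A w x / P w) = ∑ x, ent (A w x) - ent (P w)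
        rw [Finset.mul_sum]
        rw [Finset.sum_congr rfl fun x _ => ent_div (hA0 w x) hw]
        rw [Finset.sum_sub_distrib]
        congr 1
        rw [← Finset.sum_mul, ← Finset.sum_div, hAP w, div_self hw.ne', one_mul]
      · show P w * ∑ y, ent (Bb w y / P w) = ∑ y, ent (Bb w y) - ent (P w)
        rw [Finset.mul_sum]
        rw [Finset.sum_congr rfl fun y _ => ent_div (hB0 w y) hw]
        rw [Finset.sum_sub_distrib]
        congr 1
        rw [← Finset.sum_mul, ← Finset.sum_div, hBP w, div_self hw.ne', one_mul]
    · have hw0 : P w = 0 := le_antisymm (not_lt.1 hw) (hP0 w)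
      have hpz : ∀ x y, p x y w = 0 := hPzero w hw0
      have hAz : ∀ x, A w x = 0 := by
        intro x; rw [hAdef]; exact Finset.sum_eq_zero fun y _ => hpz x y
      have hBz : ∀ y, Bb w y = 0 := by
        intro y; rw [hBdef]; exact Finset.sum_eq_zero fun x _ => hpz x y
      have e1 : (fun x y => p x y w) = (0 : X → Y → ℝ) := by
        funext x y; rw [hpz x y]; rfl
      have e2 : ∑ x, ent (A w x) - ent (P w) = 0 := by
        have hz : ∀ x, ent (A w x) = 0 := fun x => by rw [hAz x, ent_zero]
        rw [Finset.sum_congr rfl fun x _ => hz x, hw0, ent_zero]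
        simp
      have e3 : ∑ y, ent (Bb w y) - ent (P w) = 0 := by
        have hz : ∀ y, ent (Bb w y) = 0 := fun y => by rw [hBz y, ent_zero]
        rw [Finset.sum_congr rfl fun y _ => hz y, hw0, ent_zero]
        simp
      rw [e1, e2, e3, hw0, zero_smul]
      rfl
  have hvsum : ∑ w, P w • Phi X Y (aw w, bw w) = (M, F1, F2) := by
    rw [Finset.sum_congr rfl fun w _ => hkey w]
    refine Prod.ext ?_ (Prod.ext ?_ ?_)
    · rw [Prod.fst_sum]
      funext x y
      rw [Finset.sum_apply, Finset.sum_apply]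
    · rw [Prod.snd_sum, Prod.fst_sum]
      show ∑ w, (∑ x, ent (A w x) - ent (P w)) = F1
      rw [Finset.sum_sub_distrib, hF1def]
    · rw [Prod.snd_sum, Prod.snd_sum]
      show ∑ w, (∑ y, ent (Bb w y) - ent (P w)) = F2
      rw [Finset.sum_sub_distrib, hF2def]
  have hvmem : ((M, F1, F2) : (X → Y → ℝ) × ℝ × ℝ)
      ∈ convexHull ℝ (Phi X Y '' Dset X Y) := by
    rw [← hvsum]
    exact mem_convexHull_of_exists_fintype P (fun w => Phi X Y (aw w, bw w)) hP0 hPsum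
      (fun w => Set.mem_image_of_mem _ ⟨hawS w, hbwS w⟩) rfl
  obtain ⟨μ, av, bv, hμ0, hμ1, havS, hbvS, hsum⟩ := exists_rep (M, F1, F2) hvmem
  have hav0 : ∀ u x, 0 ≤ av u x := fun u x => (havS u).1 x
  have hav1 : ∀ u, ∑ x, av u x = 1 := fun u => (havS u).2
  have hbv0 : ∀ u y, 0 ≤ bv u y := fun u y => (hbvS u).1 y
  have hbv1 : ∀ u, ∑ y, bv u y = 1 := fun u => (hbvS u).2
  -- components of the representation
  have c1 : ∀ x y, ∑ u, μ u * (av u x * bv u y) = M x y := by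
    intro x y
    have h := congrArg Prod.fst hsum
    rw [Prod.fst_sum] at h
    have h2 := congrArg (fun G => G x y) h
    simp only [Finset.sum_apply, Prod.smul_fst, Pi.smul_apply, smul_eq_mul] at h2
    exact h2
  have c2 : ∑ u, μ u * (∑ x, ent (av u x)) = F1 := by
    have h := congrArg (fun t : (X → Y → ℝ) × ℝ × ℝ => t.2) hsum
    have h2 := congrArg Prod.fst h
    simp only at h2
    rw [Prod.snd_sum, Prod.fst_sum] at h2
    simpa [smul_eq_mul, Phi] using h2
  have c3 : ∑ u, μ u * (∑ y, ent (bv u y)) = F2 := by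
    have h := congrArg (fun t : (X → Y → ℝ) × ℝ × ℝ => t.2) hsum
    have h2 := congrArg Prod.snd h
    simp only at h2
    rw [Prod.snd_sum, Prod.snd_sum] at h2
    simpa [smul_eq_mul, Phi] using h2
  -- marginal computations for the new distribution
  have hXmargU : ∀ u x, ∑ y, μ u * (av u x * bv u y) = μ u * av u x := by
    intro u x
    have h : ∀ y, μ u * (av u x * bv u y) = (μ u * av u x) * bv u y := fun y => by ring
    rw [Finset.sum_congr rfl fun y _ => h y, ← Finset.mul_sum, hbv1 u, mul_one]
  have hYmargU : ∀ u y, ∑ x, μ u * (av u x * bv u y) = μ u * bv u y := by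
    intro u y
    have h : ∀ x, μ u * (av u x * bv u y) = (μ u * bv u y) * av u x := fun x => by ring
    rw [Finset.sum_congr rfl fun x _ => h x, ← Finset.mul_sum, hav1 u, mul_one]
  have hUmarg : ∀ u, ∑ x, ∑ y, μ u * (av u x * bv u y) = μ u := by
    intro u
    rw [Finset.sum_congr rfl fun x _ => hXmargU u x, ← Finset.mul_sum, hav1 u, mul_one]
  -- the two information-difference computations, new side
  have hdiff1 : H2 μ - H2 (fun s : X × Fin (Fintype.card X * Fintype.card Y + 1) =>
      μ s.2 * av s.2 s.1) = F1 := by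
    rw [H2_ent, H2_ent]
    have hsplit : ∑ s : X × Fin (Fintype.card X * Fintype.card Y + 1),
        ent (μ s.2 * av s.2 s.1) = ∑ u, ∑ x, ent (μ u * av u x) := by
      rw [Fintype.sum_prod_type]
      exact Finset.sum_comm
    have hper : ∀ u, ∑ x, ent (μ u * av u x) = ent (μ u) + μ u * ∑ x, ent (av u x) := by
      intro u
      rw [Finset.sum_congr rfl fun x _ => ent_mul (hμ0 u) (hav0 u x)]
      rw [Finset.sum_add_distrib, ← Finset.sum_mul, hav1 u, one_mul, ← Finset.mul_sum]
    rw [hsplit, Finset.sum_congr rfl fun u _ => hper u, Finset.sum_add_distrib]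
    rw [← c2]
    ring
  have hdiff2 : H2 μ - H2 (fun s : (X × Y) × Fin (Fintype.card X * Fintype.card Y + 1) =>
      μ s.2 * (av s.2 s.1.1 * bv s.2 s.1.2)) = F1 + F2 := by
    rw [H2_ent, H2_ent]
    have hsplit : ∑ s : (X × Y) × Fin (Fintype.card X * Fintype.card Y + 1),
        ent (μ s.2 * (av s.2 s.1.1 * bv s.2 s.1.2))
        = ∑ u, ∑ x, ∑ y, ent (μ u * (av u x * bv u y)) := by
      rw [Fintype.sum_prod_type, Finset.sum_comm]
      exact Finset.sum_congr rfl fun u _ => Fintype.sum_prod_type _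
    have hper : ∀ u, ∑ x, ∑ y, ent (μ u * (av u x * bv u y))
        = ent (μ u) + μ u * ((∑ x, ent (av u x)) + (∑ y, ent (bv u y))) := by
      intro u
      have h1 : ∀ x y, ent (μ u * (av u x * bv u y))
          = (av u x * bv u y) * ent (μ u)
            + (bv u y * ent (av u x)) * μ u + (av u x * ent (bv u y)) * μ u := by
        intro x y
        rw [ent_mul (hμ0 u) (mul_nonneg (hav0 u x) (hbv0 u y)),
          ent_mul (hav0 u x) (hbv0 u y)]
        ring
      have hs : ∑ x, ∑ y, ent (μ u * (av u x * bv u y))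
          = (∑ x, ∑ y, (av u x * bv u y)) * ent (μ u)
            + (∑ x, ∑ y, bv u y * ent (av u x)) * μ u
            + (∑ x, ∑ y, av u x * ent (bv u y)) * μ u := by
        rw [Finset.sum_congr rfl fun x _ => Finset.sum_congr rfl fun y _ => h1 x y]
        simp [Finset.sum_add_distrib, Finset.sum_mul]
      have t1 : ∑ x, ∑ y, (av u x * bv u y) = 1 := by
        have h : ∀ x, ∑ y, av u x * bv u y = av u x := fun x => by
          rw [← Finset.mul_sum, hbv1 u, mul_one]
        rw [Finset.sum_congr rfl fun x _ => h x, hav1 u]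
      have t2 : ∑ x, ∑ y, bv u y * ent (av u x) = ∑ x, ent (av u x) := by
        have h : ∀ x, ∑ y, bv u y * ent (av u x) = ent (av u x) := fun x => by
          rw [← Finset.sum_mul, hbv1 u, one_mul]
        exact Finset.sum_congr rfl fun x _ => h x
      have t3 : ∑ x, ∑ y, av u x * ent (bv u y) = ∑ y, ent (bv u y) := by
        have h : ∀ x, ∑ y, av u x * ent (bv u y) = av u x * ∑ y, ent (bv u y) := fun x =>
          by rw [← Finset.mul_sum]
        rw [Finset.sum_congr rfl fun x _ => h x, ← Finset.sum_mul, hav1 u, one_mul]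
      rw [hs, t1, t2, t3]
      ring
    have hlin : ∑ u, μ u * ((∑ x, ent (av u x)) + (∑ y, ent (bv u y))) = F1 + F2 := by
      have hh : ∀ u, μ u * ((∑ x, ent (av u x)) + (∑ y, ent (bv u y)))
          = μ u * (∑ x, ent (av u x)) + μ u * (∑ y, ent (bv u y)) := fun u => by ring
      rw [Finset.sum_congr rfl fun u _ => hh u, Finset.sum_add_distrib, c2, c3]
    rw [hsplit, Finset.sum_congr rfl fun u _ => hper u, Finset.sum_add_distrib, hlin]
    ring
  -- the two information-difference computations, old side
  have hdiff1' : H2 P - H2 (fun s : X × W => A s.2 s.1) = F1 := by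
    rw [H2_ent, H2_ent]
    have hsplit : ∑ s : X × W, ent (A s.2 s.1) = ∑ w, ∑ x, ent (A w x) := by
      rw [Fintype.sum_prod_type]
      exact Finset.sum_comm
    rw [hsplit, hF1def]
    ring
  have hentp : ∀ w, ∑ x, ∑ y, ent (p x y w)
      = ∑ x, ent (A w x) + ∑ y, ent (Bb w y) - ent (P w) := by
    intro w
    by_cases hw : 0 < P w
    · have hperxy : ∀ x y, P w * ent (p x y w)
          = Bb w y * ent (A w x) + A w x * ent (Bb w y) - p x y w * ent (P w) := by
        intro x y
        have hpd : p x y w = A w x * Bb w y / P w := by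
          rw [eq_div_iff hw.ne']
          rw [mul_comm (p x y w) (P w)]
          exact hM x y w
        calc P w * ent (p x y w) = P w * ent ((A w x * Bb w y) / P w) := by rw [← hpd]
          _ = ent (A w x * Bb w y) - (A w x * Bb w y / P w) * ent (P w) :=
              ent_div (mul_nonneg (hA0 w x) (hB0 w y)) hw
          _ = Bb w y * ent (A w x) + A w x * ent (Bb w y) - p x y w * ent (P w) := by
              rw [ent_mul (hA0 w x) (hB0 w y), ← hpd]
      have hmul : P w * (∑ x, ∑ y, ent (p x y w)) = ∑ x, ∑ y, P w * ent (p x y w) := by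
        rw [Finset.mul_sum]
        exact Finset.sum_congr rfl fun x _ => Finset.mul_sum _ _ _
      have t1 : ∑ x, ∑ y, Bb w y * ent (A w x) = P w * ∑ x, ent (A w x) := by
        have h : ∀ x, ∑ y, Bb w y * ent (A w x) = P w * ent (A w x) := fun x => by
          rw [← Finset.sum_mul, hBP w]
        rw [Finset.sum_congr rfl fun x _ => h x, ← Finset.mul_sum]
      have t2 : ∑ x, ∑ y, A w x * ent (Bb w y) = P w * ∑ y, ent (Bb w y) := by
        have h : ∀ x, ∑ y, A w x * ent (Bb w y) = A w x * ∑ y, ent (Bb w y) := fun x => by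
          rw [← Finset.mul_sum]
        rw [Finset.sum_congr rfl fun x _ => h x, ← Finset.sum_mul, hAP w]
      have t3 : ∑ x, ∑ y, p x y w * ent (P w) = P w * ent (P w) := by
        have h : ∀ x, ∑ y, p x y w * ent (P w) = A w x * ent (P w) := fun x => by
          rw [← Finset.sum_mul]
        rw [Finset.sum_congr rfl fun x _ => h x, ← Finset.sum_mul, hAP w]
      have hstep : P w * (∑ x, ∑ y, ent (p x y w))
          = P w * (∑ x, ent (A w x) + ∑ y, ent (Bb w y) - ent (P w)) := by
        rw [hmul, Finset.sum_congr rfl fun x _ => Finset.sum_congr rfl fun y _ => hperxy x y]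
        rw [Finset.sum_congr rfl fun x _ => Finset.sum_sub_distrib _ _]
        rw [Finset.sum_sub_distrib]
        rw [Finset.sum_congr rfl fun x _ => Finset.sum_add_distrib]
        rw [Finset.sum_add_distrib]
        rw [t1, t2, t3]
        ring
      exact mul_left_cancel₀ hw.ne' hstep
    · have hw0 : P w = 0 := le_antisymm (not_lt.1 hw) (hP0 w)
      have hpz : ∀ x y, p x y w = 0 := hPzero w hw0
      have hAz : ∀ x, A w x = 0 := by
        intro x; rw [hAdef]; exact Finset.sum_eq_zero fun y _ => hpz x y
      have hBz : ∀ y, Bb w y = 0 := by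
        intro y; rw [hBdef]; exact Finset.sum_eq_zero fun x _ => hpz x y
      have z1 : ∑ x, ∑ y, ent (p x y w) = 0 :=
        Finset.sum_eq_zero fun x _ => Finset.sum_eq_zero fun y _ => by rw [hpz x y, ent_zero]
      have z2 : ∑ x, ent (A w x) = 0 := Finset.sum_eq_zero fun x _ => by rw [hAz x, ent_zero]
      have z3 : ∑ y, ent (Bb w y) = 0 := Finset.sum_eq_zero fun y _ => by rw [hBz y, ent_zero]
      rw [z1, z2, z3, hw0, ent_zero]
      ring
  have hdiff2' : H2 P - H2 (fun s : (X × Y) × W => p s.1.1 s.1.2 s.2) = F1 + F2 := by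
    rw [H2_ent, H2_ent]
    have hsplit : ∑ s : (X × Y) × W, ent (p s.1.1 s.1.2 s.2)
        = ∑ w, ∑ x, ∑ y, ent (p x y w) := by
      rw [Fintype.sum_prod_type, Finset.sum_comm]
      exact Finset.sum_congr rfl fun w _ => Fintype.sum_prod_type _
    rw [hsplit, Finset.sum_congr rfl fun w _ => hentp w]
    rw [Finset.sum_sub_distrib, Finset.sum_add_distrib, hF1def, hF2def]
    ring
  -- the new joint distribution
  refine ⟨fun x y u => μ u * (av u x * bv u y), ?_, ?_, ?_, ?_, ?_, ?_⟩
  · intro x y u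
    exact mul_nonneg (hμ0 u) (mul_nonneg (hav0 u x) (hbv0 u y))
  · rw [Finset.sum_congr rfl fun x _ =>
      Finset.sum_congr rfl fun y _ => c1 x y]
    exact hp1
  · intro x y u
    rw [hUmarg u, hXmargU u x, hYmargU u y]
    ring
  · intro x y
    rw [c1 x y]
  · have e1 : (fun x => ∑ y, ∑ u, μ u * (av u x * bv u y))
        = (fun x => ∑ y, ∑ w, p x y w) := by
      funext x
      exact Finset.sum_congr rfl fun y _ => c1 x y
    have e2 : (fun u => ∑ x, ∑ y, μ u * (av u x * bv u y)) = μ := funext hUmarg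
    have e3 : (fun s : X × Fin (Fintype.card X * Fintype.card Y + 1) =>
        ∑ y, μ s.2 * (av s.2 s.1 * bv s.2 y))
        = (fun s => μ s.2 * av s.2 s.1) := funext fun s => hXmargU s.2 s.1
    have e4 : (fun s : X × W => ∑ y, p s.1 y s.2) = (fun s => A s.2 s.1) := rfl
    rw [e1, e2, e3, e4]
    linarith [hdiff1, hdiff1']
  · have e1 : (fun s : X × Y => ∑ u, μ u * (av u s.1 * bv u s.2))
        = (fun s : X × Y => ∑ w, p s.1 s.2 w) := by
      funext s
      exact c1 s.1 s.2
    have e2 : (fun u => ∑ x, ∑ y, μ u * (av u x * bv u y)) = μ := funext hUmarg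
    rw [e1, e2]
    linarith [hdiff2, hdiff2']
end

section
/- If Π ≪ Γ and Γ is an i.i.d. discrete distribution of n variables on a finite alphabet, then the Kullback–Leibler divergence is bounded in terms of total variation: D(Π‖Γ) = O( (n + log(1/TV)) · TV ) as TV = ‖Π − Γ‖_TV → 0 and n → ∞; more precisely there is a constant C depending only on the single-letter alphabet and distribution such that D(Π‖Γ) ≤ C·(n + log(1/TV))·TV for TV small enough. -/
/-- Pointwise reverse-Pinsker-type bound: for `0 ≤ p ≤ 1`, `0 < q`, and `M` an upper
bound on `-log q` with `0 ≤ M`, we have `p log (p/q) ≤ max 0 (p-q) * (1+M)`. -/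
lemma kl_ptwise (p q M : ℝ) (hp0 : 0 ≤ p) (hp1 : p ≤ 1) (hq : 0 < q)
    (hM : -Real.log q ≤ M) (hM0 : 0 ≤ M) :
    p * Real.log (p / q) ≤ max 0 (p - q) * (1 + M) := by
  rcases le_or_gt p q with hpq | hpq
  · have hmax : max 0 (p - q) = 0 := max_eq_left (by linarith)
    rw [hmax, zero_mul]
    rcases eq_or_lt_of_le hp0 with h0 | h0
    · simp [← h0]
    · have hlog : Real.log (p / q) ≤ 0 :=
        Real.log_nonpos (by positivity) ((div_le_one hq).mpr hpq)
      exact mul_nonpos_of_nonneg_of_nonpos hp0 hlog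
  · have hmax : max 0 (p - q) = p - q := max_eq_right (by linarith)
    rw [hmax]
    have hp0' : 0 < p := lt_trans hq hpq
    have hlogp : Real.log p ≤ 0 := Real.log_nonpos hp0'.le hp1
    have hlogpq : Real.log (p / q) = Real.log p - Real.log q :=
      Real.log_div hp0'.ne' hq.ne'
    have hlogM : Real.log (p / q) ≤ M := by rw [hlogpq]; linarith
    have h1 : Real.log (p / q) ≤ p / q - 1 := Real.log_le_sub_one_of_pos (by positivity)
    have h2 : q * Real.log (p / q) ≤ p - q := by
      have := mul_le_mul_of_nonneg_left h1 hq.le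
      have hq' : q * (p / q - 1) = p - q := by field_simp
      linarith [hq' ▸ this]
    have h3 : (p - q) * Real.log (p / q) ≤ (p - q) * M :=
      mul_le_mul_of_nonneg_left hlogM (by linarith)
    nlinarith [h2, h3]

/-- For Γ an i.i.d. product of a full-support single-letter distribution γ on a
finite alphabet, there is a constant C (depending only on γ) such that for all n and all
distributions Π on W^n, if the total variation TV is small enough (and positive) then
D(Π‖Γ) ≤ C (n + log(1/TV)) TV. -/
theorem kl_bound_from_tv {W : Type*} [Fintype W] [Nonempty W]
    (γ : W → ℝ) (hγ0 : ∀ w, 0 < γ w) (hγ1 : ∑ w, γ w = 1) :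
    ∃ C > (0:ℝ), ∃ δ > (0:ℝ), ∀ (n : ℕ) (P : (Fin n → W) → ℝ),
      (∀ x, 0 ≤ P x) → (∑ x, P x = 1) →
      ∀ tv : ℝ, tv = (1/2) * ∑ x, |P x - ∏ t, γ (x t)| → 0 < tv → tv ≤ δ →
        ∑ x, P x * Real.logb 2 (P x / ∏ t, γ (x t))
          ≤ C * ((n : ℝ) + Real.logb 2 (1 / tv)) * tv := by
  obtain ⟨w0, -, hw0⟩ := Finset.exists_min_image Finset.univ γ
    ⟨Classical.arbitrary W, Finset.mem_univ _⟩
  have hc0 : 0 < γ w0 := hγ0 w0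
  have hc1 : γ w0 ≤ 1 := by
    calc γ w0 ≤ ∑ w, γ w :=
          Finset.single_le_sum (fun w _ => (hγ0 w).le) (Finset.mem_univ w0)
    _ = 1 := hγ1
  set L : ℝ := -Real.log (γ w0) with hLdef
  have hL0 : 0 ≤ L := by
    have := Real.log_nonpos hc0.le hc1
    simp only [hLdef]; linarith
  have hlog2 : 0 < Real.log 2 := Real.log_pos (by norm_num)
  refine ⟨2 * (1 + L) / Real.log 2, by positivity, 1/2, by norm_num, ?_⟩
  intro n P hP0 hP1 tv htv htv0 htvδ
  set Q : (Fin n → W) → ℝ := fun x => ∏ t, γ (x t) with hQdef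
  have hQ0 : ∀ x, 0 < Q x := fun x => Finset.prod_pos (fun t _ => hγ0 (x t))
  have hQlog : ∀ x, -Real.log (Q x) ≤ (n : ℝ) * L := by
    intro x
    have hprod : Real.log (Q x) = ∑ t, Real.log (γ (x t)) :=
      Real.log_prod (fun t _ => (hγ0 (x t)).ne')
    have hsum : (n : ℝ) * (-L) ≤ ∑ t, Real.log (γ (x t)) := by
      calc (n : ℝ) * (-L) = ∑ _t : Fin n, (-L) := by
            simp [Finset.sum_const, mul_comm]
      _ ≤ ∑ t, Real.log (γ (x t)) := by
            apply Finset.sum_le_sum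
            intro t _
            have : Real.log (γ w0) ≤ Real.log (γ (x t)) :=
              Real.log_le_log hc0 (hw0 (x t) (Finset.mem_univ _))
            simp only [hLdef]; linarith
    rw [hprod]; linarith
  have hM0 : (0:ℝ) ≤ (n : ℝ) * L := by positivity
  have key : ∀ x, P x * Real.log (P x / Q x) ≤ max 0 (P x - Q x) * (1 + (n : ℝ) * L) := by
    intro x
    refine kl_ptwise _ _ _ (hP0 x) ?_ (hQ0 x) (hQlog x) hM0
    calc P x ≤ ∑ y, P y := Finset.single_le_sum (fun y _ => hP0 y) (Finset.mem_univ x)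
    _ = 1 := hP1
  have habs : ∑ x, |P x - Q x| = 2 * tv := by rw [htv]; ring
  have hsum : ∑ x, P x * Real.log (P x / Q x) ≤ (1 + (n : ℝ) * L) * (2 * tv) := by
    calc ∑ x, P x * Real.log (P x / Q x)
        ≤ ∑ x, max 0 (P x - Q x) * (1 + (n : ℝ) * L) :=
          Finset.sum_le_sum fun x _ => key x
    _ = (∑ x, max 0 (P x - Q x)) * (1 + (n : ℝ) * L) := by rw [Finset.sum_mul]
    _ ≤ (∑ x, |P x - Q x|) * (1 + (n : ℝ) * L) := by
          apply mul_le_mul_of_nonneg_right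
          · exact Finset.sum_le_sum fun x _ => max_le (abs_nonneg _) (le_abs_self _)
          · positivity
    _ = (1 + (n : ℝ) * L) * (2 * tv) := by rw [habs]; ring
  set A : ℝ := Real.logb 2 (1 / tv) with hAdef
  have hA1 : 1 ≤ A := by
    have h2tv : (2:ℝ) ≤ 1 / tv := by
      have := one_div_le_one_div_of_le htv0 htvδ
      simpa using this
    calc (1:ℝ) = Real.logb 2 2 := by simp
    _ ≤ A := Real.logb_le_logb_of_le (by norm_num) (by norm_num) h2tv
  have hlhs : ∑ x, P x * Real.logb 2 (P x / Q x)
      = (∑ x, P x * Real.log (P x / Q x)) / Real.log 2 := by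
    rw [Finset.sum_div]
    congr 1
    ext x
    rw [Real.logb, mul_div_assoc]
  show ∑ x, P x * Real.logb 2 (P x / Q x)
      ≤ 2 * (1 + L) / Real.log 2 * ((n : ℝ) + A) * tv
  rw [hlhs]
  have hfinal : (1 + (n : ℝ) * L) * (2 * tv) ≤ 2 * (1 + L) * (((n : ℝ) + A) * tv) := by
    have hn0 : (0:ℝ) ≤ (n : ℝ) := Nat.cast_nonneg n
    nlinarith [mul_nonneg hL0 (sub_nonneg.mpr hA1), mul_nonneg (mul_nonneg hn0 hL0) htv0.le,
      mul_nonneg hn0 htv0.le, mul_nonneg hL0 htv0.le, sub_nonneg.mpr hA1, htv0.le]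
  calc (∑ x, P x * Real.log (P x / Q x)) / Real.log 2
      ≤ ((1 + (n : ℝ) * L) * (2 * tv)) / Real.log 2 := by
        exact div_le_div_of_nonneg_right hsum hlog2.le |>.trans_eq rfl
  _ ≤ (2 * (1 + L) * (((n : ℝ) + A) * tv)) / Real.log 2 :=
        div_le_div_of_nonneg_right hfinal hlog2.le
  _ = 2 * (1 + L) / Real.log 2 * (((n : ℝ)) + A) * tv := by ring
end

section
/- For the joint distribution (X,Y) uniform over all pairs in {1,…,m}² with X ≠ Y, and any random variable U such that X − U − Y forms a Markov chain, for each value u with P(U=u)>0, letting a_u = |supp(X|U=u)|, the supports of X and Y given U=u are disjoint, and H(X|U=u) ≤ log₂ a_u and H(X,Y|U=u) ≤ log₂ a_u + log₂(m − a_u). -/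
open Classical in
lemma entropy_le_logb_card {α : Type*} [Fintype α] (P : α → ℝ)
    (h0 : ∀ a, 0 ≤ P a) (h1 : ∑ a, P a = 1) (c : ℝ)
    (hc : ((Finset.univ.filter (fun a => 0 < P a)).card : ℝ) ≤ c) :
    H2 P ≤ Real.logb 2 c := by
  classical
  set A := Finset.univ.filter (fun a => 0 < P a) with hA
  have hmem : ∀ a ∈ A, 0 < P a := by
    intro a ha; simpa [hA] using ha
  have hA1 : ∑ a ∈ A, P a = 1 := by
    rw [← h1]
    apply Finset.sum_filter_of_ne
    intro a _ h
    exact lt_of_le_of_ne (h0 a) (Ne.symm h)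
  have hAne : A.Nonempty := by
    by_contra h
    rw [Finset.not_nonempty_iff_eq_empty] at h
    rw [h, Finset.sum_empty] at hA1
    norm_num at hA1
  have hcardpos : (0:ℝ) < A.card := by
    exact_mod_cast Finset.card_pos.mpr hAne
  have hcpos : (0:ℝ) < c := lt_of_lt_of_le hcardpos hc
  have key : ∀ a ∈ A, P a - 1/c ≤ P a * Real.log (c * P a) := by
    intro a ha
    have hPa := hmem a ha
    have hcp : 0 < c * P a := mul_pos hcpos hPa
    have h := Real.log_le_sub_one_of_pos (inv_pos.mpr hcp)
    rw [Real.log_inv] at h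
    have h2 : 1 - (c * P a)⁻¹ ≤ Real.log (c * P a) := by linarith
    have h3 := mul_le_mul_of_nonneg_left h2 hPa.le
    have h4 : P a * (1 - (c * P a)⁻¹) = P a - 1/c := by
      field_simp
    linarith [h3, h4.symm.le, h4.le]
  have sum_ge : 1 - A.card / c ≤ ∑ a ∈ A, P a * Real.log (c * P a) := by
    have := Finset.sum_le_sum key
    have heq : ∑ a ∈ A, (P a - 1/c) = 1 - A.card / c := by
      rw [Finset.sum_sub_distrib, hA1, Finset.sum_const, nsmul_eq_mul]
      ring
    linarith [heq ▸ this]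
  have expand : ∑ a ∈ A, P a * Real.log (c * P a)
      = Real.log c + ∑ a ∈ A, P a * Real.log (P a) := by
    calc ∑ a ∈ A, P a * Real.log (c * P a)
        = ∑ a ∈ A, (P a * Real.log c + P a * Real.log (P a)) := by
          apply Finset.sum_congr rfl
          intro a ha
          rw [Real.log_mul hcpos.ne' (hmem a ha).ne']
          ring
      _ = Real.log c + ∑ a ∈ A, P a * Real.log (P a) := by
          rw [Finset.sum_add_distrib, ← Finset.sum_mul, hA1]; ring
  have hcard_div : A.card / c ≤ 1 := by
    rw [div_le_one hcpos]; exact hc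
  have main : -∑ a ∈ A, P a * Real.log (P a) ≤ Real.log c := by
    linarith
  have hH2 : H2 P = (-∑ a ∈ A, P a * Real.log (P a)) / Real.log 2 := by
    unfold H2
    have : ∑ a, P a * Real.logb 2 (P a) = ∑ a ∈ A, P a * Real.logb 2 (P a) := by
      symm
      apply Finset.sum_filter_of_ne
      intro a _ h
      rcases lt_or_eq_of_le (h0 a) with h' | h'
      · exact h'
      · exact absurd (by rw [← h']; ring) h
    rw [this, neg_div]
    congr 1
    rw [Finset.sum_div]
    apply Finset.sum_congr rfl
    intro a _
    rw [Real.logb, mul_div_assoc]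
  rw [hH2, Real.logb]
  have hl2 : (0:ℝ) < Real.log 2 := Real.log_pos (by norm_num)
  gcongr

open Classical in
/-- For (X,Y) uniform over pairs in {1,…,m}² with X ≠ Y and any U with
X − U − Y Markov, for each u with P(U=u) > 0 the conditional supports of X and Y are disjoint,
H(X|U=u) ≤ log₂ a_u and H(X,Y|U=u) ≤ log₂ a_u + log₂(m − a_u), where a_u is the size of the
conditional support of X. -/
theorem scatter_support_entropy_bounds (m : ℕ) (hm : 2 ≤ m)
    {U : Type*} [Fintype U]
    (r : Fin m → Fin m → U → ℝ)
    (hr0 : ∀ x y u, 0 ≤ r x y u)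
    (hr1 : ∑ x, ∑ y, ∑ u, r x y u = 1)
    (hmarg : ∀ x y, ∑ u, r x y u =
      if x ≠ y then 1 / ((m : ℝ) * ((m : ℝ) - 1)) else 0)
    (hMarkov : ∀ x y u, (∑ x', ∑ y', r x' y' u) * r x y u
        = (∑ y', r x y' u) * (∑ x', r x' y u))
    (u : U) (hu : 0 < ∑ x, ∑ y, r x y u) :
    Disjoint (Finset.univ.filter (fun x => 0 < ∑ y, r x y u))
        (Finset.univ.filter (fun y => 0 < ∑ x, r x y u)) ∧
    H2 (fun x => (∑ y, r x y u) / ∑ x, ∑ y, r x y u)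
      ≤ Real.logb 2 ((Finset.univ.filter (fun x => 0 < ∑ y, r x y u)).card) ∧
    H2 (fun s : Fin m × Fin m => r s.1 s.2 u / ∑ x, ∑ y, r x y u)
      ≤ Real.logb 2 ((Finset.univ.filter (fun x => 0 < ∑ y, r x y u)).card)
        + Real.logb 2 ((m : ℝ)
            - ((Finset.univ.filter (fun x => 0 < ∑ y, r x y u)).card : ℝ)) := by
  classical
  set S := ∑ x, ∑ y, r x y u with hS
  set p : Fin m → ℝ := fun x => ∑ y, r x y u with hp
  set q : Fin m → ℝ := fun y => ∑ x, r x y u with hq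
  have hp0 : ∀ x, 0 ≤ p x := fun x => Finset.sum_nonneg fun y _ => hr0 x y u
  have hq0 : ∀ y, 0 ≤ q y := fun y => Finset.sum_nonneg fun x _ => hr0 x y u
  have hSp : S = ∑ x, p x := rfl
  have hSq : S = ∑ y, q y := by rw [hS, Finset.sum_comm]
  -- r x x u = 0
  have hdiag : ∀ x, r x x u = 0 := by
    intro x
    have h := hmarg x x
    simp only [ne_eq, not_true_eq_false, if_false] at h
    have := (Finset.sum_eq_zero_iff_of_nonneg (fun u' _ => hr0 x x u')).mp h
    exact this u (Finset.mem_univ u)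
  have hMark : ∀ x y, S * r x y u = p x * q y := fun x y => hMarkov x y u
  set A := Finset.univ.filter (fun x => 0 < p x) with hAdef
  set B := Finset.univ.filter (fun y => 0 < q y) with hBdef
  -- disjointness
  have hdisj : Disjoint A B := by
    rw [Finset.disjoint_left]
    intro x hxA hxB
    have hpx : 0 < p x := by simpa [hAdef] using hxA
    have hqx : 0 < q x := by simpa [hBdef] using hxB
    have := hMark x x
    rw [hdiag x, mul_zero] at this
    nlinarith
  -- nonemptiness of A and B
  have hAne : A.Nonempty := by
    by_contra h
    rw [Finset.not_nonempty_iff_eq_empty] at h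
    have : ∀ x, p x = 0 := by
      intro x
      by_contra hx
      have : x ∈ A := by
        simp [hAdef, lt_of_le_of_ne (hp0 x) (Ne.symm hx)]
      simp [h] at this
    rw [hSp] at hu
    simp [this] at hu
  have hBne : B.Nonempty := by
    by_contra h
    rw [Finset.not_nonempty_iff_eq_empty] at h
    have : ∀ y, q y = 0 := by
      intro y
      by_contra hy
      have : y ∈ B := by
        simp [hBdef, lt_of_le_of_ne (hq0 y) (Ne.symm hy)]
      simp [h] at this
    rw [hSq] at hu
    simp [this] at hu
  have hAcard : 1 ≤ A.card := Finset.card_pos.mpr hAne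
  have hBcard : 1 ≤ B.card := Finset.card_pos.mpr hBne
  have hABm : A.card + B.card ≤ m := by
    have := Finset.card_union_of_disjoint hdisj
    calc A.card + B.card = (A ∪ B).card := this.symm
      _ ≤ (Finset.univ : Finset (Fin m)).card := Finset.card_le_card (Finset.subset_univ _)
      _ = m := Finset.card_univ.trans (Fintype.card_fin m)
  refine ⟨hdisj, ?_, ?_⟩
  · -- H(X|u) ≤ log2 |A|
    apply entropy_le_logb_card
    · intro x; exact div_nonneg (hp0 x) hu.le
    · rw [← Finset.sum_div, ← hSp, div_self hu.ne']
    · have : (Finset.univ.filter (fun x => 0 < p x / S)) = A := by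
        apply Finset.filter_congr
        intro x _
        simp [div_pos_iff, hu, hu.not_gt, (hp0 x)]
      rw [this]
  · -- joint entropy
    have hsum1 : ∑ s : Fin m × Fin m, r s.1 s.2 u / S = 1 := by
      rw [← Finset.sum_div, Fintype.sum_prod_type, ← hS, div_self hu.ne']
    have hsupp : (Finset.univ.filter (fun s : Fin m × Fin m => 0 < r s.1 s.2 u / S))
        ⊆ A ×ˢ B := by
      intro s hs
      have hrs : 0 < r s.1 s.2 u / S := by simpa using hs
      have hr : 0 < r s.1 s.2 u := by
        by_contra h
        push_neg at h
        have : r s.1 s.2 u = 0 := le_antisymm h (hr0 _ _ _)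
        rw [this, zero_div] at hrs
        exact lt_irrefl 0 hrs
      have hpx : 0 < p s.1 :=
        lt_of_lt_of_le hr (Finset.single_le_sum (fun y _ => hr0 s.1 y u) (Finset.mem_univ s.2))
      have hqy : 0 < q s.2 :=
        lt_of_lt_of_le hr (Finset.single_le_sum (fun x _ => hr0 x s.2 u) (Finset.mem_univ s.1))
      simp [Finset.mem_product, hAdef, hBdef, hpx, hqy]
    have hBle : (B.card : ℝ) ≤ (m : ℝ) - A.card := by
      have : A.card + B.card ≤ m := hABm
      have := (Nat.cast_le (α := ℝ)).mpr this
      push_cast at this ⊢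
      linarith
    have hcardle : (((Finset.univ.filter (fun s : Fin m × Fin m => 0 < r s.1 s.2 u / S)).card : ℝ))
        ≤ (A.card : ℝ) * ((m : ℝ) - A.card) := by
      have h1 : (Finset.univ.filter (fun s : Fin m × Fin m => 0 < r s.1 s.2 u / S)).card
          ≤ A.card * B.card := by
        calc _ ≤ (A ×ˢ B).card := Finset.card_le_card hsupp
          _ = A.card * B.card := Finset.card_product A B
      calc (((Finset.univ.filter (fun s : Fin m × Fin m => 0 < r s.1 s.2 u / S)).card : ℝ))
          ≤ (A.card : ℝ) * B.card := by exact_mod_cast h1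
        _ ≤ (A.card : ℝ) * ((m : ℝ) - A.card) := by
            apply mul_le_mul_of_nonneg_left hBle
            positivity
    have hApos : (0:ℝ) < A.card := by exact_mod_cast hAcard
    have hmApos : (0:ℝ) < (m : ℝ) - A.card := by
      have : (1:ℝ) ≤ (B.card : ℝ) := by exact_mod_cast hBcard
      linarith
    calc H2 (fun s : Fin m × Fin m => r s.1 s.2 u / S)
        ≤ Real.logb 2 ((A.card : ℝ) * ((m : ℝ) - A.card)) := by
          apply entropy_le_logb_card _ (fun s => div_nonneg (hr0 _ _ _) hu.le) hsum1
          exact hcardle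
      _ = Real.logb 2 (A.card : ℝ) + Real.logb 2 ((m : ℝ) - A.card) :=
          Real.logb_mul hApos.ne' hmApos.ne'
end
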